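/- arXiv:2104.00665 — 3 statements merged into one kernel-verified Lean document; each statement's English description precedes it below -/
import Mathlib

section
/- For a lazy reversible chain Q = (P+I)/2 on a finite state space, for every state x and every M > 0, the sum over all k ≥ 0 of (Q^k(x,x) − π(x)) is at most e^{M/2}/(e^{M/2}−1) times the sum over 0 ≤ k ≤ ⌈M·t_rel⌉ of (Q^k(x,x) − π(x)). -/
open scoped BigOperators

open Finset


section StochAux
variable {V : Type*} [Fintype V] [DecidableEq V]

lemma stoch_pow_nonneg (A : Matrix V V ℝ) (h : ∀ x y, 0 ≤ A x y) (n : ℕ) :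
    ∀ x y, 0 ≤ (A ^ n) x y := by
  induction n with
  | zero => intro x y; by_cases hxy : x = y <;> simp [hxy, Matrix.one_apply]
  | succ n ih =>
    intro x y
    rw [pow_succ, Matrix.mul_apply]
    exact Finset.sum_nonneg fun z _ => mul_nonneg (ih x z) (h z y)

lemma stoch_pow_row (A : Matrix V V ℝ) (h : ∀ x, ∑ y, A x y = 1) (n : ℕ) :
    ∀ x, ∑ y, (A ^ n) x y = 1 := by
  induction n with
  | zero => intro x; simp [Matrix.one_apply]
  | succ n ih =>
    intro x
    simp only [pow_succ, Matrix.mul_apply]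
    rw [Finset.sum_comm]
    calc ∑ z, ∑ y, (A ^ n) x z * A z y = ∑ z, (A ^ n) x z * ∑ y, A z y := by
          simp [Finset.mul_sum]
      _ = 1 := by simp [h, ih x]

lemma stoch_pow_mulVec (A : Matrix V V ℝ) (f : V → ℝ) (hf : A.mulVec f = f) (n : ℕ) :
    (A ^ n).mulVec f = f := by
  induction n with
  | zero => simp [Matrix.one_mulVec]
  | succ n ih => rw [pow_succ, ← Matrix.mulVec_mulVec, hf, ih]

/-- Harmonic functions of an irreducible stochastic matrix are constant. -/
lemma harmonic_const (A : Matrix V V ℝ) (hnn : ∀ x y, 0 ≤ A x y)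
    (hrow : ∀ x, ∑ y, A x y = 1) (hirr : ∀ x y, ∃ n : ℕ, 0 < (A ^ n) x y)
    [Nonempty V] (f : V → ℝ) (hf : A.mulVec f = f) :
    ∃ c : ℝ, ∀ y, f y = c := by
  obtain ⟨x₀, -, hx₀⟩ := Finset.exists_max_image Finset.univ f ⟨Classical.arbitrary V, mem_univ _⟩
  refine ⟨f x₀, fun y => ?_⟩
  obtain ⟨n, hn⟩ := hirr x₀ y
  have h1 : ∑ z, (A ^ n) x₀ z * f z = f x₀ := congrFun (stoch_pow_mulVec A f hf n) x₀
  have h2 : ∑ z, (A ^ n) x₀ z * (f x₀ - f z) = 0 := by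
    simp only [mul_sub, Finset.sum_sub_distrib, h1, ← Finset.sum_mul, stoch_pow_row A hrow n x₀,
      one_mul, sub_self]
  have h3 := (Finset.sum_eq_zero_iff_of_nonneg (fun z _ => mul_nonneg
    (stoch_pow_nonneg A hnn n x₀ z)
    (sub_nonneg.mpr (hx₀ z (mem_univ _))))).mp h2 y (mem_univ _)
  rcases mul_eq_zero.mp h3 with h | h
  · exact absurd h hn.ne'
  · linarith [sub_eq_zero.mp h]

omit [DecidableEq V] in
/-- Eigenvalues of a stochastic matrix have absolute value at most 1. -/
lemma eig_abs_le (A : Matrix V V ℝ) (hnn : ∀ x y, 0 ≤ A x y)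
    (hrow : ∀ x, ∑ y, A x y = 1) (f : V → ℝ) (l : ℝ) (hf : f ≠ 0)
    (h : A.mulVec f = l • f) : |l| ≤ 1 := by
  have hne : Nonempty V := by
    by_contra hV
    exact hf (funext fun y => absurd (Nonempty.intro y) hV)
  obtain ⟨x₀, -, hx₀⟩ := Finset.exists_max_image Finset.univ (fun y => |f y|)
    ⟨Classical.arbitrary V, mem_univ _⟩
  have hpos : 0 < |f x₀| := by
    obtain ⟨y, hy⟩ := Function.ne_iff.mp hf
    exact lt_of_lt_of_le (abs_pos.mpr hy) (hx₀ y (mem_univ _))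
  have key : |l| * |f x₀| ≤ |f x₀| := by
    have h1 : |l * f x₀| = |(A.mulVec f) x₀| := by rw [h]; simp [Pi.smul_apply, smul_eq_mul]
    calc |l| * |f x₀| = |l * f x₀| := (abs_mul l (f x₀)).symm
      _ = |∑ z, A x₀ z * f z| := by rw [h1]; rfl
      _ ≤ ∑ z, |A x₀ z * f z| := Finset.abs_sum_le_sum_abs _ _
      _ = ∑ z, A x₀ z * |f z| := by
          refine Finset.sum_congr rfl fun z _ => ?_
          rw [abs_mul, abs_of_nonneg (hnn x₀ z)]
      _ ≤ ∑ z, A x₀ z * |f x₀| := Finset.sum_le_sum fun z _ =>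
          mul_le_mul_of_nonneg_left (hx₀ z (mem_univ _)) (hnn x₀ z)
      _ = |f x₀| := by rw [← Finset.sum_mul, hrow x₀, one_mul]
  exact le_of_mul_le_mul_right (by linarith [key]) hpos

end StochAux

/-- The relaxation time `t_rel = 1/γ`, where `γ = 1 - max{λ : λ eigenvalue of P, λ ≠ 1}`. -/
noncomputable def relaxTime {V : Type*} [Fintype V] (P : V → V → ℝ) : ℝ :=
  (1 - sSup {l : ℝ | l ≠ 1 ∧ ∃ f : V → ℝ, f ≠ 0 ∧ (Matrix.of P).mulVec f = l • f})⁻¹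

/-- For the lazy chain `Q = (P+I)/2` of a finite irreducible reversible
chain `P`, for every state `x` and every `M > 0`,
`∑_{k ≥ 0} (Q^k(x,x) − π(x)) ≤ e^{M/2}/(e^{M/2}−1) · ∑_{k=0}^{⌈M t_rel⌉} (Q^k(x,x) − π(x))`. -/
theorem lazy_return_sum_bound {V : Type*} [Fintype V] [DecidableEq V]
    (P : V → V → ℝ) (π : V → ℝ)
    (hnn : ∀ x y, 0 ≤ P x y) (hrow : ∀ x, ∑ y, P x y = 1)
    (hirr : ∀ x y, ∃ n : ℕ, 0 < (Matrix.of P ^ n) x y)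
    (hπ0 : ∀ x, 0 < π x) (hπ1 : ∑ x, π x = 1)
    (hrev : ∀ x y, π x * P x y = π y * P y x) :
    ∀ (x : V) (M : ℝ), 0 < M →
      (∑' k : ℕ, ((((2:ℝ)⁻¹ • (Matrix.of P + 1)) ^ k) x x - π x))
        ≤ Real.exp (M / 2) / (Real.exp (M / 2) - 1) *
          ∑ k ∈ Finset.range (⌈M * relaxTime P⌉₊ + 1),
            ((((2:ℝ)⁻¹ • (Matrix.of P + 1)) ^ k) x x - π x) := by
  intro x M hM
  classical
  rw [show relaxTime P = (1 - sSup {l : ℝ | l ≠ 1 ∧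
    ∃ f : V → ℝ, f ≠ 0 ∧ (Matrix.of P).mulVec f = l • f})⁻¹ from rfl]
  have hne : Nonempty V := ⟨x⟩
  set Q : Matrix V V ℝ := (2:ℝ)⁻¹ • (Matrix.of P + 1) with hQdef
  -- basic facts about Q
  have hQnn : ∀ a b, 0 ≤ Q a b := by
    intro a b
    rw [hQdef]
    simp only [Matrix.smul_apply, Matrix.add_apply, Matrix.of_apply, smul_eq_mul]
    have h1 : (0:ℝ) ≤ (1 : Matrix V V ℝ) a b := by
      by_cases hab : a = b <;> simp [Matrix.one_apply, hab]
    have := hnn a b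
    positivity
  have hQrow : ∀ a, ∑ b, Q a b = 1 := by
    intro a
    rw [hQdef]
    simp only [Matrix.smul_apply, Matrix.add_apply, Matrix.of_apply, smul_eq_mul]
    rw [← Finset.mul_sum, Finset.sum_add_distrib, hrow a]
    have : ∑ b, (1 : Matrix V V ℝ) a b = 1 := by simp [Matrix.one_apply]
    rw [this]; norm_num
  have hQrev : ∀ a b, π a * Q a b = π b * Q b a := by
    intro a b
    rw [hQdef]
    simp only [Matrix.smul_apply, Matrix.add_apply, Matrix.of_apply, smul_eq_mul]
    by_cases hab : a = b
    · subst hab; ring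
    · rw [Matrix.one_apply_ne hab, Matrix.one_apply_ne (Ne.symm hab)]
      have := hrev a b
      ring_nf
      linarith
  -- eigenvalue transfer Q → P
  have hQP : ∀ (f : V → ℝ) (ν : ℝ), Q.mulVec f = ν • f →
      (Matrix.of P).mulVec f = (2*ν - 1) • f := by
    intro f ν h
    have h3 : (2:ℝ) • Q.mulVec f = (Matrix.of P).mulVec f + f := by
      rw [hQdef, Matrix.smul_mulVec, Matrix.add_mulVec, Matrix.one_mulVec, smul_smul]
      norm_num
    rw [h] at h3
    funext y
    have := congrFun h3 y
    simp only [Pi.smul_apply, Pi.add_apply, smul_eq_mul] at this ⊢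
    linarith
  have hPQ : ∀ (f : V → ℝ) (l : ℝ), (Matrix.of P).mulVec f = l • f →
      Q.mulVec f = ((l+1)/2) • f := by
    intro f l h
    rw [hQdef, Matrix.smul_mulVec, Matrix.add_mulVec, Matrix.one_mulVec, h]
    funext y
    simp only [Pi.smul_apply, Pi.add_apply, smul_eq_mul]
    ring
  -- the symmetrization
  set s : V → ℝ := fun y => Real.sqrt (π y) with hsdef
  have hs0 : ∀ y, 0 < s y := fun y => Real.sqrt_pos.mpr (hπ0 y)
  have hss : ∀ y, s y * s y = π y := fun y => Real.mul_self_sqrt (hπ0 y).le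
  set D : Matrix V V ℝ := Matrix.diagonal s with hDdef
  set D' : Matrix V V ℝ := Matrix.diagonal (fun y => (s y)⁻¹) with hD'def
  have hDD' : D * D' = 1 := by
    rw [hDdef, hD'def, Matrix.diagonal_mul_diagonal]
    have : (fun i => s i * (s i)⁻¹) = fun _ => (1:ℝ) :=
      funext fun i => mul_inv_cancel₀ (hs0 i).ne'
    rw [this, Matrix.diagonal_one]
  have hD'D : D' * D = 1 := by
    rw [hDdef, hD'def, Matrix.diagonal_mul_diagonal]
    have : (fun i => (s i)⁻¹ * s i) = fun _ => (1:ℝ) :=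
      funext fun i => inv_mul_cancel₀ (hs0 i).ne'
    rw [this, Matrix.diagonal_one]
  set T : Matrix V V ℝ := D * Q * D' with hTdef
  have hTapp : ∀ a b, T a b = s a * Q a b * (s b)⁻¹ := by
    intro a b
    rw [hTdef, hDdef, hD'def, Matrix.mul_diagonal, Matrix.diagonal_mul]
  have hT : T.IsHermitian := by
    show T.conjTranspose = T
    ext a b
    rw [Matrix.conjTranspose_apply, star_trivial, hTapp, hTapp]
    have h2 : s b * s b * Q b a = s a * s a * Q a b := by
      rw [hss, hss]; linarith [hQrev a b]
    have hsa := (hs0 a).ne'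
    have hsb := (hs0 b).ne'
    field_simp
    linear_combination h2
  set U : Matrix V V ℝ := (hT.eigenvectorUnitary : Matrix V V ℝ) with hUdef
  set μ : V → ℝ := hT.eigenvalues with hμdef
  have hUstar : U * star U = 1 := Matrix.mem_unitaryGroup_iff.mp hT.eigenvectorUnitary.2
  have hstarU : star U * U = 1 := Matrix.mem_unitaryGroup_iff'.mp hT.eigenvectorUnitary.2
  have hspec : T = U * Matrix.diagonal μ * star U := by
    have h := hT.spectral_theorem
    rwa [RCLike.ofReal_real_eq_id, Function.id_comp] at h
  have horth : ∀ i j, ∑ y, U y i * U y j = if i = j then (1:ℝ) else 0 := by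
    intro i j
    have h := (Matrix.ext_iff.mpr hstarU) i j
    rw [Matrix.mul_apply] at h
    simp only [Matrix.star_eq_conjTranspose, Matrix.conjTranspose_apply, star_trivial,
      Matrix.one_apply] at h
    exact h
  have hcol : ∀ i, T.mulVec (fun y => U y i) = μ i • (fun y => U y i) := by
    intro i
    have h2 : (fun y => U y i) = ⇑(hT.eigenvectorBasis i) := by
      funext y; exact hT.eigenvectorUnitary_apply y i
    rw [h2, hμdef]
    exact hT.mulVec_eigenvectorBasis i
  have hcolne : ∀ i, (fun y => U y i) ≠ 0 := by
    intro i h0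
    have h1 := horth i i
    rw [if_pos rfl] at h1
    have h2 : ∑ y, U y i * U y i = 0 := Finset.sum_eq_zero fun y _ => by
      have hy := congrFun h0 y
      simp only [Pi.zero_apply] at hy
      rw [hy, mul_zero]
    rw [h2] at h1
    exact one_ne_zero h1.symm
  -- every eigenvalue of T appears among the μ i
  have heig : ∀ (g : V → ℝ) (ν : ℝ), g ≠ 0 → T.mulVec g = ν • g → ∃ i, μ i = ν := by
    intro g ν hg hTg
    set c : V → ℝ := (star U).mulVec g with hc
    have hgc : U.mulVec c = g := by
      rw [hc, Matrix.mulVec_mulVec, hUstar, Matrix.one_mulVec]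
    have hcne : c ≠ 0 := by
      intro h0
      apply hg
      rw [← hgc, h0, Matrix.mulVec_zero]
    have h1 : (Matrix.diagonal μ).mulVec c = ν • c := by
      have h2 : T.mulVec (U.mulVec c) = ν • (U.mulVec c) := by rw [hgc]; exact hTg
      rw [Matrix.mulVec_mulVec, hspec] at h2
      have h3 : U * Matrix.diagonal μ * star U * U = U * Matrix.diagonal μ := by
        rw [mul_assoc (U * Matrix.diagonal μ), hstarU, mul_one]
      rw [h3, ← Matrix.mulVec_mulVec, ← Matrix.mulVec_smul] at h2
      have h5 := congrArg (fun v => (star U).mulVec v) h2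
      simpa only [Matrix.mulVec_mulVec, ← mul_assoc, hstarU, Matrix.one_mulVec,
        one_mul] using h5
    obtain ⟨i, hi⟩ := Function.ne_iff.mp hcne
    refine ⟨i, ?_⟩
    have h6 := congrFun h1 i
    rw [Matrix.mulVec_diagonal] at h6
    simp only [Pi.smul_apply, smul_eq_mul] at h6
    exact mul_right_cancel₀ hi h6
  -- eigen transfer T → Q and Q/P → T
  have hTQ : ∀ (g : V → ℝ) (ν : ℝ), T.mulVec g = ν • g →
      Q.mulVec (D'.mulVec g) = ν • (D'.mulVec g) := by
    intro g ν h
    have h1 : Q.mulVec (D'.mulVec g) = D'.mulVec (T.mulVec g) := by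
      rw [Matrix.mulVec_mulVec, Matrix.mulVec_mulVec]
      congr 1
      rw [hTdef, ← mul_assoc, ← mul_assoc, hD'D, one_mul]
    rw [h1, h, Matrix.mulVec_smul]
  have hD'ne : ∀ g : V → ℝ, g ≠ 0 → D'.mulVec g ≠ 0 := by
    intro g hg h0
    apply hg
    have h1 : D.mulVec (D'.mulVec g) = g := by
      rw [Matrix.mulVec_mulVec, hDD', Matrix.one_mulVec]
    rw [← h1, h0, Matrix.mulVec_zero]
  have hDne : ∀ g : V → ℝ, g ≠ 0 → D.mulVec g ≠ 0 := by
    intro g hg h0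
    apply hg
    have h1 : D'.mulVec (D.mulVec g) = g := by
      rw [Matrix.mulVec_mulVec, hD'D, Matrix.one_mulVec]
    rw [← h1, h0, Matrix.mulVec_zero]
  have hQT : ∀ (f : V → ℝ) (ν : ℝ), Q.mulVec f = ν • f →
      T.mulVec (D.mulVec f) = ν • (D.mulVec f) := by
    intro f ν h
    rw [Matrix.mulVec_mulVec]
    have h1 : T * D = D * Q := by
      rw [hTdef, mul_assoc, hD'D, mul_one]
    rw [h1, ← Matrix.mulVec_mulVec, h, Matrix.mulVec_smul]
  -- bounds on μ
  have hμ01 : ∀ i, 0 ≤ μ i ∧ μ i ≤ 1 := by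
    intro i
    have hQi := hTQ _ _ (hcol i)
    have hPi := hQP _ _ hQi
    have habs := eig_abs_le (Matrix.of P) hnn hrow _ _ (hD'ne _ (hcolne i)) hPi
    have h := abs_le.mp habs
    constructor <;> [linarith [h.1]; linarith [h.2]]
  -- the eigenvalue set
  set E : Set ℝ := {l : ℝ | l ≠ 1 ∧ ∃ f : V → ℝ, f ≠ 0 ∧ (Matrix.of P).mulVec f = l • f}
    with hEdef
  have hEsub : E ⊆ Set.range (fun i => 2 * μ i - 1) := by
    rintro l ⟨hl1, f, hf0, hfl⟩
    obtain ⟨i, hi⟩ := heig _ _ (hDne f hf0) (hQT f _ (hPQ f l hfl))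
    exact ⟨i, by show 2 * μ i - 1 = l; rw [hi]; ring⟩
  have hEfin : E.Finite := (Set.finite_range _).subset hEsub
  have hEbdd : BddAbove E := hEfin.bddAbove
  set lam : ℝ := sSup E with hlam
  have hmemE : ∀ i, μ i ≠ 1 → (2 * μ i - 1) ∈ E := by
    intro i hi
    refine ⟨fun h => hi (by linarith [h]), D'.mulVec (fun y => U y i),
      hD'ne _ (hcolne i), hQP _ _ (hTQ _ _ (hcol i))⟩
  have hgam : 0 < 1 - lam ∧ ∀ i, μ i ≠ 1 → μ i ≤ 1 - (1 - lam)/2 := by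
    by_cases hE : E.Nonempty
    · have hlamE : lam ∈ E := hE.csSup_mem hEfin
      have hlam1 : lam ≠ 1 := hlamE.1
      obtain ⟨f, hf0, hfl⟩ := hlamE.2
      have habs := eig_abs_le (Matrix.of P) hnn hrow f lam hf0 hfl
      have hlt : lam < 1 := lt_of_le_of_ne (abs_le.mp habs).2 hlam1
      refine ⟨by linarith, fun i hi => ?_⟩
      have := le_csSup hEbdd (hmemE i hi)
      linarith
    · have hEe : E = ∅ := Set.not_nonempty_iff_eq_empty.mp hE
      have hl0 : lam = 0 := by rw [hlam, hEe, Real.sSup_empty]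
      exact ⟨by rw [hl0]; norm_num,
        fun i hi => absurd (hmemE i hi) (by rw [hEe]; exact Set.notMem_empty _)⟩
  -- the eigenvector √π for eigenvalue 1
  have hw : T.mulVec s = s := by
    funext y
    have : T.mulVec s y = ∑ z, T y z * s z := rfl
    rw [this]
    calc ∑ z, T y z * s z = ∑ z, s y * Q y z := by
          refine Finset.sum_congr rfl fun z _ => ?_
          rw [hTapp, mul_assoc, inv_mul_cancel₀ (hs0 z).ne', mul_one]
        _ = s y := by rw [← Finset.mul_sum, hQrow, mul_one]
  have hsne : s ≠ 0 := by
    intro h0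
    have := congrFun h0 x
    simp only [Pi.zero_apply] at this
    exact (hs0 x).ne' this
  obtain ⟨i₀, hi₀⟩ := heig s 1 hsne (by rw [one_smul]; exact hw)
  -- structure of eigenvectors for eigenvalue 1
  have hone : ∀ i, μ i = 1 → ∃ c : ℝ, (∀ y, U y i = c * s y) ∧ c * c = 1 := by
    intro i hi
    have hQi : Q.mulVec (D'.mulVec (fun y => U y i)) =
        (1:ℝ) • (D'.mulVec (fun y => U y i)) := by
      have h := hTQ _ _ (hcol i)
      rwa [hi] at h
    have hPi : (Matrix.of P).mulVec (D'.mulVec (fun y => U y i)) =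
        D'.mulVec (fun y => U y i) := by
      have h := hQP _ _ hQi
      rw [show (2*(1:ℝ) - 1) = 1 by norm_num, one_smul] at h
      exact h
    obtain ⟨c, hc⟩ := harmonic_const (Matrix.of P) hnn hrow hirr _ hPi
    have hcy : ∀ y, U y i = c * s y := by
      intro y
      have h := hc y
      rw [hD'def, Matrix.mulVec_diagonal] at h
      have := hs0 y
      field_simp at h
      linarith [h]
    refine ⟨c, hcy, ?_⟩
    have h1 := horth i i
    rw [if_pos rfl] at h1
    have h2 : ∑ y, U y i * U y i = c * c := by
      calc ∑ y, U y i * U y i = ∑ y, c * c * (s y * s y) := by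
            refine Finset.sum_congr rfl fun y _ => by rw [hcy y]; ring
        _ = c * c * ∑ y, π y := by
            rw [← Finset.mul_sum]
            congr 1
            exact Finset.sum_congr rfl fun y _ => hss y
        _ = c * c := by rw [hπ1, mul_one]
    rw [h2] at h1
    exact h1
  have hfilter : Finset.univ.filter (fun i => μ i = 1) = {i₀} := by
    ext j
    simp only [Finset.mem_filter, Finset.mem_univ, true_and, Finset.mem_singleton]
    constructor
    · intro hj
      by_contra hij
      obtain ⟨ci, hci, hci2⟩ := hone j hj
      obtain ⟨cj, hcj, hcj2⟩ := hone i₀ hi₀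
      have h0 := horth j i₀
      rw [if_neg hij] at h0
      have h2 : ∑ y, U y j * U y i₀ = ci * cj := by
        calc ∑ y, U y j * U y i₀ = ∑ y, ci * cj * (s y * s y) := by
              refine Finset.sum_congr rfl fun y _ => by rw [hci y, hcj y]; ring
          _ = ci * cj * ∑ y, π y := by
              rw [← Finset.mul_sum]
              congr 1
              exact Finset.sum_congr rfl fun y _ => hss y
          _ = ci * cj := by rw [hπ1, mul_one]
      rw [h2] at h0
      nlinarith [hci2, hcj2, h0]
    · intro h; rw [h]; exact hi₀
  -- diagonal entries of T^k
  have hmulUD : ∀ (A B : Matrix V V ℝ), (U * A * star U) * (U * B * star U)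
      = U * (A * B) * star U := by
    intro A B
    calc (U * A * star U) * (U * B * star U)
        = U * A * ((star U * U) * (B * star U)) := by simp only [mul_assoc]
      _ = U * (A * B) * star U := by rw [hstarU, one_mul]; simp only [mul_assoc]
  have hTk : ∀ k : ℕ, T ^ k = U * Matrix.diagonal (fun i => μ i ^ k) * star U := by
    intro k
    induction k with
    | zero =>
      rw [pow_zero]
      have : Matrix.diagonal (fun i => μ i ^ 0) = (1 : Matrix V V ℝ) := by
        simp [Matrix.diagonal_one]
      rw [this, mul_one, hUstar]
    | succ k ih =>
      rw [pow_succ, ih, hspec, hmulUD, Matrix.diagonal_mul_diagonal]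
      have : (fun i => μ i ^ k * μ i) = fun i => μ i ^ (k+1) :=
        funext fun i => (pow_succ _ _).symm
      rw [this]
  have hdiag : ∀ k : ℕ, (T ^ k) x x = ∑ i, μ i ^ k * (U x i * U x i) := by
    intro k
    rw [hTk k, Matrix.mul_apply]
    refine Finset.sum_congr rfl fun i _ => ?_
    rw [Matrix.mul_diagonal, Matrix.star_eq_conjTranspose, Matrix.conjTranspose_apply,
      star_trivial]
    ring
  have hTQk : ∀ k : ℕ, T ^ k = D * Q ^ k * D' := by
    intro k
    induction k with
    | zero => rw [pow_zero, pow_zero, mul_one, hDD']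
    | succ k ih =>
      rw [pow_succ, pow_succ, ih, hTdef]
      calc D * Q ^ k * D' * (D * Q * D') = D * Q ^ k * ((D' * D) * (Q * D')) := by
            simp only [mul_assoc]
        _ = D * (Q ^ k * Q) * D' := by rw [hD'D, one_mul]; simp only [mul_assoc]
  have hQk : ∀ k : ℕ, (T ^ k) x x = (Q ^ k) x x := by
    intro k
    rw [hTQk k, hDdef, hD'def, Matrix.mul_diagonal, Matrix.diagonal_mul]
    rw [mul_assoc, mul_comm ((Q ^ k) x x), ← mul_assoc,
      mul_inv_cancel₀ (hs0 x).ne', one_mul]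
  -- the return probability excess
  set a : ℕ → ℝ := fun k => (Q ^ k) x x - π x with ha_def
  have hsplit : ∀ k : ℕ, a k
      = ∑ i ∈ Finset.univ.filter (fun i => ¬ μ i = 1), μ i ^ k * (U x i * U x i) := by
    intro k
    have h1 : (Q ^ k) x x = ∑ i, μ i ^ k * (U x i * U x i) := (hQk k).symm.trans (hdiag k)
    have h2 := Finset.sum_filter_add_sum_filter_not Finset.univ (fun i => μ i = 1)
      (fun i => μ i ^ k * (U x i * U x i))
    have h3 : ∑ i ∈ Finset.univ.filter (fun i => μ i = 1), μ i ^ k * (U x i * U x i)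
        = π x := by
      rw [hfilter, Finset.sum_singleton, hi₀, one_pow, one_mul]
      obtain ⟨c, hc, hc2⟩ := hone i₀ hi₀
      rw [hc x]
      calc c * s x * (c * s x) = (c * c) * (s x * s x) := by ring
        _ = π x := by rw [hc2, hss x, one_mul]
    rw [ha_def]
    simp only
    rw [h1, ← h2, h3]
    ring
  have ha0 : ∀ k, 0 ≤ a k := by
    intro k
    rw [hsplit k]
    exact Finset.sum_nonneg fun i _ =>
      mul_nonneg (pow_nonneg (hμ01 i).1 k) (mul_self_nonneg _)
  -- the decay estimate
  set ρ : ℝ := Real.exp (-((1 - lam)/2)) with hρdef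
  have hρ0 : 0 ≤ ρ := (Real.exp_pos _).le
  have hρ1 : ρ < 1 := by
    have h : ρ < Real.exp 0 := Real.exp_lt_exp.mpr (by linarith [hgam.1])
    simpa using h
  have hμρ : ∀ i, μ i ≠ 1 → μ i ≤ ρ := by
    intro i hi
    have h1 := hgam.2 i hi
    have h2 := Real.add_one_le_exp (-((1 - lam)/2))
    rw [hρdef]
    linarith
  have hkey : ∀ t u : ℕ, a (t + u) ≤ ρ ^ u * a t := by
    intro t u
    rw [hsplit, hsplit, Finset.mul_sum]
    refine Finset.sum_le_sum fun i hi => ?_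
    have hμi1 : ¬ μ i = 1 := (Finset.mem_filter.mp hi).2
    have hμi0 := (hμ01 i).1
    have hμiρ := hμρ i hμi1
    have hUU := mul_self_nonneg (U x i)
    calc μ i ^ (t + u) * (U x i * U x i)
        = (μ i ^ u * μ i ^ t) * (U x i * U x i) := by rw [pow_add]; ring
      _ ≤ (ρ ^ u * μ i ^ t) * (U x i * U x i) := by
          apply mul_le_mul_of_nonneg_right _ hUU
          exact mul_le_mul_of_nonneg_right (pow_le_pow_left₀ hμi0 hμiρ u) (pow_nonneg hμi0 t)
      _ = ρ ^ u * (μ i ^ t * (U x i * U x i)) := by ring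
  have hsummable : Summable a :=
    Summable.of_nonneg_of_le ha0 (fun k => by simpa using hkey 0 k)
      ((summable_geometric_of_lt_one hρ0 hρ1).mul_right (a 0))
  -- the block length
  set m : ℕ := ⌈M * (1 - lam)⁻¹⌉₊ + 1 with hmdef
  have hm1 : M * (1 - lam)⁻¹ ≤ (m:ℝ) := by
    calc M * (1 - lam)⁻¹ ≤ (⌈M * (1 - lam)⁻¹⌉₊ : ℝ) := Nat.le_ceil _
      _ ≤ (m:ℝ) := by rw [hmdef]; push_cast; linarith
  set q : ℝ := Real.exp (-(M/2)) with hqdef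
  have hq0 : 0 ≤ q := (Real.exp_pos _).le
  have hq1 : q < 1 := by
    have h : q < Real.exp 0 := Real.exp_lt_exp.mpr (by linarith)
    simpa using h
  have hmge : M ≤ (m:ℝ) * (1 - lam) := by
    have h := mul_le_mul_of_nonneg_right hm1 hgam.1.le
    rwa [mul_assoc, inv_mul_cancel₀ hgam.1.ne', mul_one] at h
  have hρm : ρ ^ m ≤ q := by
    rw [hρdef, hqdef]
    calc Real.exp (-((1 - lam)/2)) ^ m = Real.exp ((m:ℝ) * (-((1 - lam)/2))) :=
          (Real.exp_nat_mul _ m).symm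
      _ ≤ Real.exp (-(M/2)) := Real.exp_le_exp.mpr (by nlinarith [hmge])
  set S : ℝ := ∑ k ∈ Finset.range m, a k with hSdef
  have hS0 : 0 ≤ S := Finset.sum_nonneg fun k _ => ha0 k
  have hblock : ∀ j : ℕ, ∑ i ∈ Finset.range m, a (j * m + i) ≤ q ^ j * S := by
    intro j
    rw [hSdef, Finset.mul_sum]
    refine Finset.sum_le_sum fun i _ => ?_
    calc a (j * m + i) = a (i + j * m) := by rw [add_comm]
      _ ≤ ρ ^ (j * m) * a i := hkey i (j * m)
      _ = (ρ ^ m) ^ j * a i := by rw [mul_comm j m, pow_mul]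
      _ ≤ q ^ j * a i := mul_le_mul_of_nonneg_right
          (pow_le_pow_left₀ (pow_nonneg hρ0 m) hρm j) (ha0 i)
  have hpartial : ∀ J : ℕ, ∑ k ∈ Finset.range (J * m), a k ≤ (1 - q)⁻¹ * S := by
    intro J
    have h1 : ∑ k ∈ Finset.range (J * m), a k
        = ∑ j ∈ Finset.range J, ∑ i ∈ Finset.range m, a (j * m + i) := by
      induction J with
      | zero => simp
      | succ J ih =>
        rw [Nat.succ_mul, Finset.sum_range_add, ih,
          Finset.sum_range_succ (fun j => ∑ i ∈ Finset.range m, a (j * m + i)) J]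
    rw [h1]
    calc ∑ j ∈ Finset.range J, ∑ i ∈ Finset.range m, a (j * m + i)
        ≤ ∑ j ∈ Finset.range J, q ^ j * S := Finset.sum_le_sum fun j _ => hblock j
      _ = (∑ j ∈ Finset.range J, q ^ j) * S := by rw [Finset.sum_mul]
      _ ≤ (1 - q)⁻¹ * S := by
          apply mul_le_mul_of_nonneg_right _ hS0
          calc ∑ j ∈ Finset.range J, q ^ j ≤ ∑' j : ℕ, q ^ j :=
                Summable.sum_le_tsum _ (fun j _ => pow_nonneg hq0 j)
                  (summable_geometric_of_lt_one hq0 hq1)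
            _ = (1 - q)⁻¹ := tsum_geometric_of_lt_one hq0 hq1
  have hfinal : ∑' k : ℕ, a k ≤ (1 - q)⁻¹ * S := by
    apply Summable.tsum_le_of_sum_range_le hsummable
    intro n
    calc ∑ k ∈ Finset.range n, a k ≤ ∑ k ∈ Finset.range (n * m), a k := by
          apply Finset.sum_le_sum_of_subset_of_nonneg
          · exact Finset.range_subset_range.mpr (Nat.le_mul_of_pos_right n (Nat.succ_pos _))
          · exact fun k _ _ => ha0 k
      _ ≤ _ := hpartial n
  have hgt : 1 < Real.exp (M/2) := by
    have h : Real.exp 0 < Real.exp (M/2) := Real.exp_lt_exp.mpr (by linarith)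
    simpa using h
  have hconst : (1 - q)⁻¹ = Real.exp (M/2) / (Real.exp (M/2) - 1) := by
    rw [hqdef, Real.exp_neg]
    rw [show 1 - (Real.exp (M/2))⁻¹ = (Real.exp (M/2) - 1)/Real.exp (M/2) by
      field_simp]
    rw [inv_div]
  show (∑' k : ℕ, a k) ≤ Real.exp (M / 2) / (Real.exp (M / 2) - 1)
      * ∑ k ∈ Finset.range (⌈M * (1 - lam)⁻¹⌉₊ + 1), a k
  rw [← hconst, ← hmdef, ← hSdef]
  exact hfinal
end

section
/- Let a ≠ b be states of a finite irreducible chain and Γ_λ an independent geometric random variable of parameter λ. If P_a(τ_b < Γ_λ) ≥ 1/2, then E_a[N(a, τ_b)] ≤ 2·E_a[N(a, Γ_λ ∧ τ_b)]. -/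
open scoped BigOperators

/- `pathSum P x t A`: probability, for the chain with transition matrix `P` started
at `x`, of the event `A` about the first `t+1` positions of the trajectory. -/
open Classical in
noncomputable def pathSum {V : Type*} [Fintype V] (P : V → V → ℝ) (x : V) (t : ℕ)
    (A : (Fin (t+1) → V) → Prop) : ℝ :=
  ∑ w : Fin (t+1) → V,
    if w 0 = x ∧ A w then ∏ i : Fin t, P (w i.castSucc) (w i.succ) else 0

/-- `E_a[N(a,τ_b)]`: expected number of visits to `a` up to time `τ_b`, started at `a`. -/
noncomputable def visitsBeforeExp {V : Type*} [Fintype V] (P : V → V → ℝ) (a b : V) : ℝ :=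
  ∑' t : ℕ, pathSum P a t (fun w => w (Fin.last t) = a ∧ ∀ i, w i ≠ b)

/-- `E_a[N(a, Γ_λ ∧ τ_b)]`, where `Γ_λ` is an independent geometric random variable
with `P(Γ_λ ≥ t) = (1-λ)^t`. -/
noncomputable def visitsBeforeGeomExp {V : Type*} [Fintype V] (P : V → V → ℝ)
    (a b : V) (lam : ℝ) : ℝ :=
  ∑' t : ℕ, (1 - lam) ^ t *
    pathSum P a t (fun w => w (Fin.last t) = a ∧ ∀ i, w i ≠ b)

/-- `P_a(τ_b < Γ_λ)`, where `Γ_λ` is an independent geometric random variable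
with `P(Γ_λ > t) = (1-λ)^(t+1)`. -/
noncomputable def hitBeforeGeomProb {V : Type*} [Fintype V] (P : V → V → ℝ)
    (a b : V) (lam : ℝ) : ℝ :=
  ∑' t : ℕ, (1 - lam) ^ (t + 1) *
    pathSum P a t (fun w => w (Fin.last t) = b ∧ ∀ i, i ≠ Fin.last t → w i ≠ b)


/-! ### Auxiliary machinery -/

section PathSumTools

variable {V : Type*} [Fintype V]

open Classical

lemma pathSum_congr (P : V → V → ℝ) {x : V} {t : ℕ} {A B : (Fin (t+1) → V) → Prop}
    (h : ∀ w : Fin (t+1) → V, w 0 = x → (A w ↔ B w)) :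
    pathSum P x t A = pathSum P x t B := by
  unfold pathSum
  refine Finset.sum_congr rfl fun w _ => ?_
  by_cases hw : w 0 = x
  · by_cases hA : A w
    · rw [if_pos ⟨hw, hA⟩, if_pos ⟨hw, (h w hw).1 hA⟩]
    · rw [if_neg (fun c => hA c.2), if_neg (fun c => hA ((h w hw).2 c.2))]
  · rw [if_neg (fun c => hw c.1), if_neg (fun c => hw c.1)]

lemma pathSum_nonneg (P : V → V → ℝ) (hnn : ∀ x y, 0 ≤ P x y) (x : V) (t : ℕ)
    (A : (Fin (t+1) → V) → Prop) : 0 ≤ pathSum P x t A := by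
  unfold pathSum
  refine Finset.sum_nonneg fun w _ => ?_
  split
  · exact Finset.prod_nonneg fun i _ => hnn _ _
  · exact le_refl 0

lemma pathSum_mono (P : V → V → ℝ) (hnn : ∀ x y, 0 ≤ P x y) {x : V} {t : ℕ}
    {A B : (Fin (t+1) → V) → Prop} (h : ∀ w, A w → B w) :
    pathSum P x t A ≤ pathSum P x t B := by
  unfold pathSum
  refine Finset.sum_le_sum fun w _ => ?_
  by_cases hw : w 0 = x ∧ A w
  · rw [if_pos hw, if_pos ⟨hw.1, h _ hw.2⟩]
  · rw [if_neg hw]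
    split
    · exact Finset.prod_nonneg fun i _ => hnn _ _
    · exact le_refl 0

lemma pathSum_zero (P : V → V → ℝ) (x : V) (A : (Fin 1 → V) → Prop) :
    pathSum P x 0 A = if A (fun _ => x) then 1 else 0 := by
  unfold pathSum
  rw [← Equiv.sum_comp (⟨fun v _ => v, fun w => w 0, fun v => rfl,
      fun w => funext fun i => by rw [Subsingleton.elim i 0]⟩ : V ≃ (Fin 1 → V))]
  simp only [Equiv.coe_fn_mk]
  rw [Finset.sum_congr rfl (fun v _ => show (if (fun _ : Fin 1 => v) 0 = x ∧ A (fun _ => v) then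
      ∏ i : Fin 0, P ((fun _ : Fin 1 => v) i.castSucc) ((fun _ : Fin 1 => v) i.succ) else 0)
      = if v = x then (if A (fun _ => v) then (1:ℝ) else 0) else 0 by
    simp only [Finset.univ_eq_empty, Finset.prod_empty]
    split_ifs with h1 h2 <;> first | rfl | (exfalso; tauto))]
  rw [Finset.sum_ite_eq' Finset.univ x (fun v => if A (fun _ => v) then (1:ℝ) else 0)]
  simp

lemma prod_cons_step (P : V → V → ℝ) (y : V) {t : ℕ} (w : Fin (t+1) → V) :
    (∏ i : Fin (t+1), P ((Fin.cons y w : Fin (t+2) → V) i.castSucc)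
      ((Fin.cons y w : Fin (t+2) → V) i.succ))
    = P y (w 0) * ∏ i : Fin t, P (w i.castSucc) (w i.succ) := by
  rw [Fin.prod_univ_succ]
  refine congrArg₂ (· * ·) ?_ (Finset.prod_congr rfl fun i _ => ?_)
  · simp
  · rw [← Fin.succ_castSucc, Fin.cons_succ, Fin.cons_succ]

lemma pathSum_succ (P : V → V → ℝ) (x : V) (t : ℕ) (C : (Fin (t+2) → V) → Prop) :
    pathSum P x (t+1) C = ∑ y, P x y * pathSum P y t (fun w => C (Fin.cons x w)) := by
  unfold pathSum
  rw [← Equiv.sum_comp (Fin.consEquiv (fun _ : Fin (t+2) => V)), Fintype.sum_prod_type]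
  have lhs : ∀ y : V, ∀ w : Fin (t+1) → V,
      (if (Fin.consEquiv (fun _ : Fin (t+2) => V)) (y, w) 0 = x ∧
          C ((Fin.consEquiv (fun _ : Fin (t+2) => V)) (y, w)) then
        ∏ i : Fin (t+1), P (((Fin.consEquiv (fun _ : Fin (t+2) => V)) (y, w)) i.castSucc)
          (((Fin.consEquiv (fun _ : Fin (t+2) => V)) (y, w)) i.succ) else 0)
      = if y = x then (if C (Fin.cons x w) then P x (w 0) * ∏ i : Fin t, P (w i.castSucc) (w i.succ) else 0) else 0 := by
    intro y w
    have hev : (Fin.consEquiv (fun _ : Fin (t+2) => V)) (y, w) = Fin.cons y w := rfl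
    rw [hev, prod_cons_step, Fin.cons_zero]
    by_cases hy : y = x
    · subst hy; simp
    · rw [if_neg (fun c => hy c.1), if_neg hy]
  rw [Finset.sum_congr rfl (fun y _ => Finset.sum_congr rfl (fun w _ => lhs y w))]
  rw [Finset.sum_comm]
  rw [Finset.sum_congr rfl (fun w _ => Finset.sum_ite_eq' Finset.univ x
      (fun _ => if C (Fin.cons x w) then P x (w 0) * ∏ i : Fin t, P (w i.castSucc) (w i.succ) else 0))]
  simp only [Finset.mem_univ, if_true]
  have rhs1 : ∀ y : V, P x y * (∑ w : Fin (t+1) → V,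
      if w 0 = y ∧ C (Fin.cons x w) then ∏ i : Fin t, P (w i.castSucc) (w i.succ) else 0)
      = ∑ w : Fin (t+1) → V, if y = w 0 then
          (if C (Fin.cons x w) then P x y * ∏ i : Fin t, P (w i.castSucc) (w i.succ) else 0) else 0 := by
    intro y
    rw [Finset.mul_sum]
    refine Finset.sum_congr rfl fun w _ => ?_
    rw [mul_ite, mul_zero]
    split_ifs with h1 h2 h3 <;> first | rfl | (exfalso; simp_all [eq_comm])
  rw [Finset.sum_congr rfl (fun y _ => rhs1 y), Finset.sum_comm]
  refine Finset.sum_congr rfl fun w _ => ?_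
  rw [Finset.sum_ite_eq' Finset.univ (w 0)
      (fun y => if C (Fin.cons x w) then P x y * ∏ i : Fin t, P (w i.castSucc) (w i.succ) else 0)]
  simp only [Finset.mem_univ, if_true]

lemma pathSum_true (P : V → V → ℝ) (hrow : ∀ x, ∑ y, P x y = 1) (x : V) (t : ℕ) :
    pathSum P x t (fun _ => True) = 1 := by
  induction t generalizing x with
  | zero => rw [pathSum_zero]; simp
  | succ t ih =>
    rw [pathSum_succ]
    simp only [ih]
    simpa using hrow x

lemma pathSum_false (P : V → V → ℝ) (x : V) (t : ℕ) (A : (Fin (t+1) → V) → Prop)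
    (hA : ∀ w, ¬ A w) : pathSum P x t A = 0 := by
  unfold pathSum
  refine Finset.sum_eq_zero fun w _ => if_neg (fun c => hA w c.2)

lemma pathSum_snoc (P : V → V → ℝ) (hrow : ∀ x, ∑ y, P x y = 1) (x : V) (t : ℕ)
    (A : (Fin (t+1) → V) → Prop) :
    pathSum P x (t+1) (fun w => A (fun i => w i.castSucc)) = pathSum P x t A := by
  induction t generalizing x with
  | zero =>
    rw [pathSum_succ, pathSum_zero]
    have key : ∀ (w : Fin 1 → V),
        (fun i : Fin 1 => (Fin.cons x w : Fin 2 → V) i.castSucc) = (fun _ => x) := by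
      intro w; funext i
      have hi : i = 0 := Subsingleton.elim _ _
      subst hi
      rw [show (0 : Fin 1).castSucc = (0 : Fin 2) from Fin.ext rfl, Fin.cons_zero]
    have : ∀ y : V, pathSum P y 0 (fun w => A fun i => (Fin.cons x w : Fin 2 → V) i.castSucc)
        = if A (fun _ => x) then 1 else 0 := by
      intro y
      rw [pathSum_zero]
      congr 1
      rw [key]
    simp only [this]
    rw [← Finset.sum_mul, hrow x, one_mul]
  | succ t ih =>
    rw [pathSum_succ, pathSum_succ]
    refine Finset.sum_congr rfl fun y _ => ?_
    congr 1
    have key : ∀ w : Fin (t+2) → V,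
        (fun i : Fin (t+2) => (Fin.cons x w : Fin (t+3) → V) i.castSucc)
        = Fin.cons x (fun i : Fin (t+1) => w i.castSucc) := by
      intro w; funext i
      refine Fin.cases ?_ (fun j => ?_) i
      · rw [Fin.castSucc_zero, Fin.cons_zero, Fin.cons_zero]
      · rw [← Fin.succ_castSucc, Fin.cons_succ, Fin.cons_succ]
    have : (fun w : Fin (t+2) → V => A fun i => (Fin.cons x w : Fin (t+3) → V) i.castSucc)
        = (fun w : Fin (t+2) → V => (fun v => A (Fin.cons x v)) (fun i : Fin (t+1) => w i.castSucc)) := by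
      funext w; rw [key]
    rw [this, ih y (fun v => A (Fin.cons x v))]

lemma pathSum_extend (P : V → V → ℝ) (hrow : ∀ x, ∑ y, P x y = 1) (x : V) (t u : ℕ)
    (A : (Fin (t+1) → V) → Prop) :
    pathSum P x (t+u) (fun w => A (fun i => w (Fin.castLE (by omega) i))) = pathSum P x t A := by
  induction u with
  | zero =>
    refine pathSum_congr P fun w _ => ?_
    have : (fun i => w (Fin.castLE (by omega) i)) = w := funext fun i => congrArg w (Fin.ext rfl)
    rw [this]
  | succ u ih =>
    have step := pathSum_snoc P hrow x (t+u)
      (fun v : Fin (t+u+1) → V => A (fun i => v (Fin.castLE (by omega) i)))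
    rw [← ih, ← step]
    refine pathSum_congr P fun w _ => ?_
    have : (fun i => w (Fin.castLE (by omega) i))
        = (fun i : Fin (t+1) => (fun j : Fin (t+u+1) => w j.castSucc) (Fin.castLE (by omega) i)) := by
      funext i; exact congrArg w (Fin.ext rfl)
    rw [this]

lemma pathSum_split (P : V → V → ℝ) (aa : V) (r u : ℕ) (B : (Fin (u+1) → V) → Prop)
    (x : V) (A : (Fin (r+1) → V) → Prop) :
    pathSum P x (u+r) (fun w => A (fun i => w (Fin.castLE (by omega) i)) ∧
        w ⟨r, by omega⟩ = aa ∧ B (fun j => w ⟨r + j.val, by omega⟩))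
    = pathSum P x r (fun w => A w ∧ w (Fin.last r) = aa) * pathSum P aa u B := by
  induction r generalizing x with
  | zero =>
    rw [pathSum_zero P x (fun w => A w ∧ w (Fin.last 0) = aa)]
    have hsuf : ∀ w : Fin (u+0+1) → V, (fun j : Fin (u+1) => w ⟨0 + j.val, by omega⟩) = w := by
      intro w; funext j; exact congrArg w (Fin.ext (by simp))
    have hpre : ∀ w : Fin (u+0+1) → V, w 0 = x →
        (fun i : Fin 1 => w (Fin.castLE (by omega) i)) = (fun _ => x) := by
      intro w hw; funext i
      have hi : (Fin.castLE (by omega : (0:ℕ)+1 ≤ u + 0 + 1) i) = (0 : Fin (u+0+1)) := by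
        have : i = 0 := Subsingleton.elim _ _
        subst this; exact Fin.ext rfl
      rw [hi, hw]
    by_cases h : A (fun _ => x) ∧ x = aa
    · obtain ⟨h1, rfl⟩ := h
      rw [if_pos ⟨h1, rfl⟩, one_mul]
      refine pathSum_congr P fun w hw => ?_
      constructor
      · rintro ⟨-, -, hB⟩; rwa [hsuf w] at hB
      · intro hB
        refine ⟨by rw [hpre w hw]; exact h1, ?_, by rw [hsuf w]; exact hB⟩
        rw [show (⟨0, by omega⟩ : Fin (u+0+1)) = 0 from Fin.ext rfl, hw]
    · rw [if_neg (fun c => h ⟨c.1, c.2⟩), zero_mul]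
      have : pathSum P x (u+0) (fun _ : Fin (u+0+1) → V => False) = 0 :=
        pathSum_false P _ _ _ (fun w hw => hw)
      rw [← this]
      refine pathSum_congr P fun w hw => ?_
      simp only [iff_false]
      rintro ⟨hA, hj, -⟩
      refine h ⟨by rwa [hpre w hw] at hA, ?_⟩
      rw [show (⟨0, by omega⟩ : Fin (u+0+1)) = 0 from Fin.ext rfl, hw] at hj
      exact hj
  | succ r ih =>
    have e1 : pathSum P x (u+(r+1)) (fun w => A (fun i => w (Fin.castLE (by omega) i)) ∧
          w ⟨r+1, by omega⟩ = aa ∧ B (fun j => w ⟨(r+1) + j.val, by omega⟩))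
        = ∑ y, P x y * pathSum P y (u+r) (fun v =>
            (fun w : Fin (u+(r+1)+1) → V => A (fun i => w (Fin.castLE (by omega) i)) ∧
              w ⟨r+1, by omega⟩ = aa ∧ B (fun j => w ⟨(r+1) + j.val, by omega⟩)) (Fin.cons x v)) :=
      pathSum_succ P x (u+r) _
    rw [e1, pathSum_succ P x r (fun w => A w ∧ w (Fin.last (r+1)) = aa), Finset.sum_mul]
    refine Finset.sum_congr rfl fun y _ => ?_
    rw [mul_assoc]
    congr 1
    have hcond : ∀ v : Fin (u+r+1) → V,
        ((fun w : Fin (u+(r+1)+1) → V => A (fun i => w (Fin.castLE (by omega) i)) ∧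
          w ⟨r+1, by omega⟩ = aa ∧ B (fun j => w ⟨(r+1) + j.val, by omega⟩)) (Fin.cons x v))
        = ((fun p : Fin (r+1) → V => A (Fin.cons x p))
              (fun i => v (Fin.castLE (by omega) i)) ∧
            v ⟨r, by omega⟩ = aa ∧ B (fun j => v ⟨r + j.val, by omega⟩)) := by
      intro v
      have hpre : (fun i : Fin (r+2) => (Fin.cons x v : Fin (u+(r+1)+1) → V) (Fin.castLE (by omega) i))
          = Fin.cons x (fun i : Fin (r+1) => v (Fin.castLE (by omega) i)) := by
        funext i
        refine Fin.cases ?_ (fun j => ?_) i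
        · rw [show (Fin.castLE (by omega) (0 : Fin (r+2))) = (0 : Fin (u+(r+1)+1)) from Fin.ext rfl,
            Fin.cons_zero, Fin.cons_zero]
        · rw [show (Fin.castLE (by omega) (Fin.succ j)) = Fin.succ (Fin.castLE (by omega) j) from Fin.ext rfl,
            Fin.cons_succ, Fin.cons_succ]
      have hjun : (Fin.cons x v : Fin (u+(r+1)+1) → V) ⟨r+1, by omega⟩ = v ⟨r, by omega⟩ := by
        rw [show (⟨r+1, by omega⟩ : Fin (u+(r+1)+1)) = Fin.succ ⟨r, by omega⟩ from Fin.ext rfl,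
          Fin.cons_succ]
      have hsuf : (fun j : Fin (u+1) => (Fin.cons x v : Fin (u+(r+1)+1) → V) ⟨(r+1) + j.val, by omega⟩)
          = (fun j : Fin (u+1) => v ⟨r + j.val, by omega⟩) := by
        funext j
        rw [show (⟨(r+1) + j.val, by omega⟩ : Fin (u+(r+1)+1)) = Fin.succ ⟨r + j.val, by omega⟩ from
          Fin.ext (by simp only [Fin.val_succ]; omega), Fin.cons_succ]
      simp only [hpre, hjun, hsuf]
    simp only [hcond]
    rw [ih y (fun p => A (Fin.cons x p))]
    congr 1

lemma sum_pathSum_le (P : V → V → ℝ) (hnn : ∀ x y, 0 ≤ P x y) {ι : Type*} (x : V) (t : ℕ)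
    (s : Finset ι) (B : ι → (Fin (t+1) → V) → Prop) (C : (Fin (t+1) → V) → Prop)
    (hdisj : ∀ i ∈ s, ∀ j ∈ s, i ≠ j → ∀ w, B i w → B j w → False)
    (hsub : ∀ i ∈ s, ∀ w, B i w → C w) :
    ∑ i ∈ s, pathSum P x t (B i) ≤ pathSum P x t C := by
  unfold pathSum
  rw [Finset.sum_comm]
  refine Finset.sum_le_sum fun w _ => ?_
  have hρ0 : 0 ≤ ∏ i : Fin t, P (w i.castSucc) (w i.succ) :=
    Finset.prod_nonneg fun i _ => hnn _ _
  by_cases hex : ∃ i ∈ s, w 0 = x ∧ B i w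
  · obtain ⟨i0, hi0, hw0, hB⟩ := hex
    have key : ∀ j ∈ s, (if w 0 = x ∧ B j w then ∏ i : Fin t, P (w i.castSucc) (w i.succ) else 0)
        = if j = i0 then ∏ i : Fin t, P (w i.castSucc) (w i.succ) else 0 := by
      intro j hj
      by_cases hji : j = i0
      · subst hji; rw [if_pos ⟨hw0, hB⟩, if_pos rfl]
      · rw [if_neg, if_neg hji]
        rintro ⟨-, hBj⟩
        exact hdisj j hj i0 hi0 hji w hBj hB
    rw [Finset.sum_congr rfl key, Finset.sum_ite_eq' s i0
      (fun _ => ∏ i : Fin t, P (w i.castSucc) (w i.succ))]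
    rw [if_pos hi0, if_pos ⟨hw0, hsub i0 hi0 w hB⟩]
  · have key : ∀ j ∈ s, (if w 0 = x ∧ B j w then ∏ i : Fin t, P (w i.castSucc) (w i.succ) else 0) = 0 :=
      fun j hj => if_neg (fun h => hex ⟨j, hj, h.1, h.2⟩)
    rw [Finset.sum_congr rfl key, Finset.sum_const_zero]
    split
    · exact hρ0
    · exact le_refl 0

lemma pathSum_le_sum (P : V → V → ℝ) (hnn : ∀ x y, 0 ≤ P x y) {ι : Type*} (x : V) (t : ℕ)
    (s : Finset ι) (A : (Fin (t+1) → V) → Prop) (B : ι → (Fin (t+1) → V) → Prop)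
    (h : ∀ w, w 0 = x → A w → ∃ i ∈ s, B i w) :
    pathSum P x t A ≤ ∑ i ∈ s, pathSum P x t (B i) := by
  unfold pathSum
  rw [Finset.sum_comm]
  refine Finset.sum_le_sum fun w _ => ?_
  have hρ0 : 0 ≤ ∏ i : Fin t, P (w i.castSucc) (w i.succ) :=
    Finset.prod_nonneg fun i _ => hnn _ _
  by_cases hw : w 0 = x ∧ A w
  · obtain ⟨i0, hi0, hB⟩ := h w hw.1 hw.2
    rw [if_pos hw]
    calc (∏ i : Fin t, P (w i.castSucc) (w i.succ))
        = (if w 0 = x ∧ B i0 w then ∏ i : Fin t, P (w i.castSucc) (w i.succ) else 0) :=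
          (if_pos ⟨hw.1, hB⟩).symm
      _ ≤ _ := Finset.single_le_sum (f := fun j =>
            if w 0 = x ∧ B j w then ∏ i : Fin t, P (w i.castSucc) (w i.succ) else 0)
          (fun j _ => by split; exacts [hρ0, le_refl 0]) hi0
  · rw [if_neg hw]
    refine Finset.sum_nonneg fun j _ => by split; exacts [hρ0, le_refl 0]

lemma pathSum_add_compl (P : V → V → ℝ) (x : V) (t : ℕ) (A : (Fin (t+1) → V) → Prop) :
    pathSum P x t A + pathSum P x t (fun w => ¬ A w) = pathSum P x t (fun _ => True) := by
  unfold pathSum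
  rw [← Finset.sum_add_distrib]
  refine Finset.sum_congr rfl fun w _ => ?_
  by_cases hw : w 0 = x
  · by_cases hA : A w <;> simp [hw, hA]
  · simp [hw]

end PathSumTools

namespace MCStmt7

variable {V : Type*} [Fintype V]

noncomputable def fA (P : V → V → ℝ) (a b : V) (t : ℕ) : ℝ :=
  pathSum P a t (fun w => w (Fin.last t) = a ∧ ∀ i, w i ≠ b)

noncomputable def gB (P : V → V → ℝ) (a b : V) (t : ℕ) : ℝ :=
  pathSum P a t (fun w => w (Fin.last t) = b ∧ ∀ i, i ≠ Fin.last t → w i ≠ b)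

noncomputable def FF (P : V → V → ℝ) (a b : V) (m : ℕ) : ℝ :=
  pathSum P a m (fun w => ∀ i, w i ≠ b)

noncomputable def qQ (P : V → V → ℝ) (a b : V) (m r : ℕ) : ℝ :=
  pathSum P a r (fun w => ((∀ i, w i ≠ b) ∧
    (∀ i : Fin (r+1), m ≤ (i : ℕ) → (i : ℕ) < r → w i ≠ a)) ∧ w (Fin.last r) = a)

variable (P : V → V → ℝ) (a b : V)

/-- lifted first-hit event -/
def Eg (n s : ℕ) (bb : V) (w : Fin (n+1) → V) : Prop :=
  ∃ h : s < n+1, (w ⟨s, h⟩ = bb ∧ ∀ i : ℕ, ∀ hi : i < n+1, i < s → w ⟨i, hi⟩ ≠ bb)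

/-- lifted q event -/
def Eq' (n m r : ℕ) (aa bb : V) (w : Fin (n+1) → V) : Prop :=
  ∃ h : r < n+1, ((∀ i : ℕ, ∀ hi : i < n+1, i ≤ r → w ⟨i, hi⟩ ≠ bb) ∧
    (∀ i : ℕ, ∀ hi : i < n+1, m ≤ i → i < r → w ⟨i, hi⟩ ≠ aa)) ∧ w ⟨r, h⟩ = aa

/-- lifted avoid event -/
def EF (n m : ℕ) (bb : V) (w : Fin (n+1) → V) : Prop :=
  ∀ i : ℕ, ∀ hi : i < n+1, i ≤ m → w ⟨i, hi⟩ ≠ bb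

variable (hnn : ∀ x y, 0 ≤ P x y) (hrow : ∀ x, ∑ y, P x y = 1)

include hrow in
lemma gB_lift {s n : ℕ} (hs : s ≤ n) : pathSum P a n (Eg n s b) = gB P a b s := by
  unfold gB
  obtain ⟨u, rfl⟩ : ∃ u, n = s + u := ⟨n - s, by omega⟩
  rw [← pathSum_extend P hrow a s u (fun w => w (Fin.last s) = b ∧ ∀ i, i ≠ Fin.last s → w i ≠ b)]
  refine pathSum_congr P fun w _ => ?_
  dsimp only
  constructor
  · rintro ⟨h, hb, hno⟩
    constructor
    · rw [show Fin.castLE (by omega) (Fin.last s) = (⟨s, h⟩ : Fin (s+u+1)) from Fin.ext rfl]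
      exact hb
    · intro i hi
      have hilt : (i : ℕ) < s := by
        rcases lt_or_eq_of_le (Nat.lt_succ_iff.mp i.isLt) with h' | h'
        · exact h'
        · exact absurd (Fin.ext h' : i = Fin.last s) hi
      rw [show Fin.castLE (by omega) i = (⟨(i : ℕ), by omega⟩ : Fin (s+u+1)) from Fin.ext rfl]
      exact hno (i : ℕ) (by omega) hilt
  · rintro ⟨hb, hno⟩
    refine ⟨by omega, ?_, ?_⟩
    · rw [show (⟨s, by omega⟩ : Fin (s+u+1)) = Fin.castLE (by omega) (Fin.last s) from Fin.ext rfl]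
      exact hb
    · intro i hi hilt
      have : (⟨i, hi⟩ : Fin (s+u+1)) = Fin.castLE (by omega) (⟨i, by omega⟩ : Fin (s+1)) := Fin.ext rfl
      rw [this]
      exact hno ⟨i, by omega⟩ (fun c => by
        have : i = s := by simpa [Fin.ext_iff] using c
        omega)

include hrow in
lemma qQ_lift {m r n : ℕ} (hr : r ≤ n) : pathSum P a n (Eq' n m r a b) = qQ P a b m r := by
  unfold qQ
  obtain ⟨u, rfl⟩ : ∃ u, n = r + u := ⟨n - r, by omega⟩
  rw [← pathSum_extend P hrow a r u (fun w => ((∀ i, w i ≠ b) ∧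
    (∀ i : Fin (r+1), m ≤ (i : ℕ) → (i : ℕ) < r → w i ≠ a)) ∧ w (Fin.last r) = a)]
  refine pathSum_congr P fun w _ => ?_
  dsimp only
  constructor
  · rintro ⟨h, ⟨hb, hna⟩, ha⟩
    refine ⟨⟨fun i => ?_, fun i h1 h2 => ?_⟩, ?_⟩
    · rw [show Fin.castLE (by omega) i = (⟨(i : ℕ), by omega⟩ : Fin (r+u+1)) from Fin.ext rfl]
      exact hb (i : ℕ) (by omega) (by omega)
    · rw [show Fin.castLE (by omega) i = (⟨(i : ℕ), by omega⟩ : Fin (r+u+1)) from Fin.ext rfl]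
      exact hna (i : ℕ) (by omega) h1 h2
    · rw [show Fin.castLE (by omega) (Fin.last r) = (⟨r, h⟩ : Fin (r+u+1)) from Fin.ext rfl]
      exact ha
  · rintro ⟨⟨hb, hna⟩, ha⟩
    refine ⟨by omega, ⟨fun i hi hir => ?_, fun i hi h1 h2 => ?_⟩, ?_⟩
    · rw [show (⟨i, hi⟩ : Fin (r+u+1)) = Fin.castLE (by omega) (⟨i, by omega⟩ : Fin (r+1)) from Fin.ext rfl]
      exact hb ⟨i, by omega⟩
    · rw [show (⟨i, hi⟩ : Fin (r+u+1)) = Fin.castLE (by omega) (⟨i, by omega⟩ : Fin (r+1)) from Fin.ext rfl]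
      exact hna ⟨i, by omega⟩ h1 h2
    · rw [show (⟨r, by omega⟩ : Fin (r+u+1)) = Fin.castLE (by omega) (Fin.last r) from Fin.ext rfl]
      exact ha

include hrow in
lemma FF_lift {m n : ℕ} (hm : m ≤ n) : pathSum P a n (EF n m b) = FF P a b m := by
  unfold FF
  obtain ⟨u, rfl⟩ : ∃ u, n = m + u := ⟨n - m, by omega⟩
  rw [← pathSum_extend P hrow a m u (fun w => ∀ i, w i ≠ b)]
  refine pathSum_congr P fun w _ => ?_
  dsimp only
  constructor
  · intro h i
    rw [show Fin.castLE (by omega) i = (⟨(i : ℕ), by omega⟩ : Fin (m+u+1)) from Fin.ext rfl]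
    exact h (i : ℕ) (by omega) (by omega)
  · intro h i hi him
    rw [show (⟨i, hi⟩ : Fin (m+u+1)) = Fin.castLE (by omega) (⟨i, by omega⟩ : Fin (m+1)) from Fin.ext rfl]
    exact h ⟨i, by omega⟩

include hnn in
lemma fA_nonneg (t : ℕ) : 0 ≤ fA P a b t := pathSum_nonneg P hnn a t _

include hnn in
lemma gB_nonneg (t : ℕ) : 0 ≤ gB P a b t := pathSum_nonneg P hnn a t _

include hnn in
lemma FF_nonneg (m : ℕ) : 0 ≤ FF P a b m := pathSum_nonneg P hnn a m _

include hnn in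
lemma qQ_nonneg (m r : ℕ) : 0 ≤ qQ P a b m r := pathSum_nonneg P hnn a r _

include hnn hrow in
lemma fA_le_one (t : ℕ) : fA P a b t ≤ 1 := by
  rw [← pathSum_true P hrow a t]
  exact pathSum_mono P hnn (fun w _ => trivial)

include hnn hrow in
lemma gB_le_one (t : ℕ) : gB P a b t ≤ 1 := by
  rw [← pathSum_true P hrow a t]
  exact pathSum_mono P hnn (fun w _ => trivial)

include hnn hrow in
lemma FF_le_one (m : ℕ) : FF P a b m ≤ 1 := by
  rw [← pathSum_true P hrow a m]
  exact pathSum_mono P hnn (fun w _ => trivial)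

include hnn hrow in
lemma sum_gB_le (m : ℕ) : ∑ s ∈ Finset.range (m+1), gB P a b s ≤ 1 - FF P a b m := by
  have hlift : ∀ s ∈ Finset.range (m+1), gB P a b s = pathSum P a m (Eg m s b) := by
    intro s hs
    exact (gB_lift P a b hrow (by simpa using Nat.lt_succ_iff.mp (Finset.mem_range.mp hs))).symm
  rw [Finset.sum_congr rfl hlift]
  have hle : ∑ s ∈ Finset.range (m+1), pathSum P a m (Eg m s b)
      ≤ pathSum P a m (fun w => ¬ (∀ i, w i ≠ b)) := by
    refine sum_pathSum_le P hnn a m _ _ _ ?_ ?_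
    · intro i _ j _ hij w hBi hBj
      rcases Nat.lt_or_ge i j with hlt | hge
      · obtain ⟨hi, hbi, -⟩ := hBi
        obtain ⟨hj, -, hnoj⟩ := hBj
        exact hnoj i (by omega) hlt hbi
      · have hlt : j < i := by omega
        obtain ⟨hj, hbj, -⟩ := hBj
        obtain ⟨hi, -, hnoi⟩ := hBi
        exact hnoi j (by omega) hlt hbj
    · rintro s _ w ⟨hs, hb, -⟩ hall
      exact hall ⟨s, hs⟩ hb
  refine le_trans hle ?_
  have hcompl := pathSum_add_compl P a m (fun w : Fin (m+1) → V => ∀ i, w i ≠ b)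
  rw [pathSum_true P hrow] at hcompl
  have hFF : pathSum P a m (fun w : Fin (m+1) → V => ∀ i, w i ≠ b) = FF P a b m := rfl
  linarith [hcompl, hFF]

include hnn hrow in
lemma sum_qQ_le (m R : ℕ) : ∑ r ∈ Finset.Icc m R, qQ P a b m r ≤ FF P a b m := by
  by_cases hmR : m ≤ R
  · have hlift : ∀ r ∈ Finset.Icc m R, qQ P a b m r = pathSum P a R (Eq' R m r a b) := by
      intro r hr
      exact (qQ_lift P a b hrow (Finset.mem_Icc.mp hr).2).symm
    rw [Finset.sum_congr rfl hlift]
    rw [← FF_lift P a b hrow hmR]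
    refine sum_pathSum_le P hnn a R _ _ _ ?_ ?_
    · intro i hi j hj hij w hBi hBj
      rcases Nat.lt_or_ge i j with hlt | hge
      · obtain ⟨hfi, -, hai⟩ := hBi
        obtain ⟨hfj, ⟨-, hnoj⟩, -⟩ := hBj
        exact hnoj i (by omega) (Finset.mem_Icc.mp hi).1 hlt hai
      · have hlt : j < i := by omega
        obtain ⟨hfj, -, haj⟩ := hBj
        obtain ⟨hfi, ⟨-, hnoi⟩, -⟩ := hBi
        exact hnoi j (by omega) (Finset.mem_Icc.mp hj).1 hlt haj
    · rintro r hr w ⟨hfr, ⟨hb, -⟩, -⟩ i hi him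
      exact hb i hi (le_trans him (Finset.mem_Icc.mp hr).1)
  · rw [Finset.Icc_eq_empty (by omega), Finset.sum_empty]
    exact FF_nonneg P a b hnn m

include hnn in
omit hrow in
lemma fA_le_sum {m t : ℕ} (hmt : m ≤ t) :
    fA P a b t ≤ ∑ r ∈ Finset.Icc m t, qQ P a b m r * fA P a b (t - r) := by
  unfold fA
  have step1 : pathSum P a t (fun w => w (Fin.last t) = a ∧ ∀ i, w i ≠ b) ≤ ∑ r ∈ Finset.Icc m t, pathSum P a t (fun w =>
      (w (Fin.last t) = a ∧ ∀ i, w i ≠ b) ∧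
      ∃ h : r < t+1, w ⟨r, h⟩ = a ∧
        ∀ i : ℕ, ∀ hi : i < t+1, m ≤ i → i < r → w ⟨i, hi⟩ ≠ a) := by
    refine pathSum_le_sum P hnn a t (Finset.Icc m t) _ _ ?_
    intro w hw0 hA
    have hex : ∃ r, m ≤ r ∧ ∃ h : r < t+1, w ⟨r, h⟩ = a := by
      refine ⟨t, hmt, by omega, ?_⟩
      rw [show (⟨t, by omega⟩ : Fin (t+1)) = Fin.last t from Fin.ext rfl]
      exact hA.1
    classical
    obtain ⟨hmr0, hlt0, ha0⟩ := Nat.find_spec hex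
    have hr0t : Nat.find hex ≤ t := Nat.find_min' hex ⟨hmt, by omega, by
      rw [show (⟨t, by omega⟩ : Fin (t+1)) = Fin.last t from Fin.ext rfl]; exact hA.1⟩
    refine ⟨Nat.find hex, Finset.mem_Icc.mpr ⟨hmr0, hr0t⟩, hA, hlt0, ha0, ?_⟩
    intro i hi him hir
    intro hia
    exact Nat.find_min hex hir ⟨him, hi, hia⟩
  refine le_trans step1 (le_of_eq (Finset.sum_congr rfl fun r hr => ?_))
  obtain ⟨hmr, hrt⟩ := Finset.mem_Icc.mp hr
  obtain ⟨u, rfl⟩ : ∃ u, t = u + r := ⟨t - r, by omega⟩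
  have hsplit := pathSum_split P a r u
    (fun w => w (Fin.last u) = a ∧ ∀ i, w i ≠ b) a
    (fun w : Fin (r+1) → V => (∀ i, w i ≠ b) ∧
      (∀ i : Fin (r+1), m ≤ (i : ℕ) → (i : ℕ) < r → w i ≠ a))
  have heq : pathSum P a (u+r) (fun w =>
      (w (Fin.last (u+r)) = a ∧ ∀ i, w i ≠ b) ∧
      ∃ h : r < (u+r)+1, w ⟨r, h⟩ = a ∧
        ∀ i : ℕ, ∀ hi : i < (u+r)+1, m ≤ i → i < r → w ⟨i, hi⟩ ≠ a)
      = pathSum P a (u+r) (fun w =>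
        ((fun w' : Fin (r+1) → V => (∀ i, w' i ≠ b) ∧
          (∀ i : Fin (r+1), m ≤ (i : ℕ) → (i : ℕ) < r → w' i ≠ a)) (fun i => w (Fin.castLE (by omega) i))) ∧
        w ⟨r, by omega⟩ = a ∧
        ((fun w' : Fin (u+1) → V => w' (Fin.last u) = a ∧ ∀ i, w' i ≠ b) (fun j => w ⟨r + j.val, by omega⟩))) := by
    refine pathSum_congr P fun w _ => ?_
    dsimp only
    constructor
    · rintro ⟨⟨hlast, hb⟩, h, ha, hno⟩
      refine ⟨⟨fun i => hb _, fun i h1 h2 => hno (i : ℕ) (by omega) h1 h2⟩, ha, ?_, fun j => hb _⟩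
      rw [show (⟨r + (Fin.last u : ℕ), by omega⟩ : Fin ((u+r)+1)) = Fin.last (u+r) from
        Fin.ext (by simp [Fin.val_last]; omega)]
      exact hlast
    · rintro ⟨⟨hbpre, hno⟩, ha, hlast, hbsuf⟩
      have hb : ∀ i : Fin ((u+r)+1), w i ≠ b := by
        intro i
        rcases le_or_gt (i : ℕ) r with hir | hir
        · have : i = Fin.castLE (by omega) (⟨(i : ℕ), by omega⟩ : Fin (r+1)) := Fin.ext rfl
          rw [this]
          exact hbpre ⟨(i : ℕ), by omega⟩
        · have : i = (⟨r + ((i : ℕ) - r), by omega⟩ : Fin ((u+r)+1)) := Fin.ext (by simp; omega)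
          rw [this]
          exact hbsuf ⟨(i : ℕ) - r, by omega⟩
      refine ⟨⟨?_, hb⟩, by omega, ha, fun i hi h1 h2 => hno ⟨i, by omega⟩ h1 h2⟩
      rw [show Fin.last (u+r) = (⟨r + (Fin.last u : ℕ), by omega⟩ : Fin ((u+r)+1)) from
        Fin.ext (by simp [Fin.val_last]; omega)]
      exact hlast
  rw [heq, hsplit]
  have hur : (u + r) - r = u := by omega
  rw [hur]
  rfl

end MCStmt7

/-- If `a ≠ b` and `P_a(τ_b < Γ_λ) ≥ 1/2`, then
`E_a[N(a, τ_b)] ≤ 2·E_a[N(a, Γ_λ ∧ τ_b)]`. -/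
theorem visitsBefore_le_two_visitsBeforeGeom {V : Type*} [Fintype V] [DecidableEq V]
    (P : V → V → ℝ)
    (hnn : ∀ x y, 0 ≤ P x y) (hrow : ∀ x, ∑ y, P x y = 1)
    (hirr : ∀ x y, ∃ n : ℕ, 0 < (Matrix.of P ^ n) x y)
    (a b : V) (hab : a ≠ b)
    (lam : ℝ) (hlam0 : 0 < lam) (hlam1 : lam < 1)
    (hhalf : 1 / 2 ≤ hitBeforeGeomProb P a b lam) :
    visitsBeforeExp P a b ≤ 2 * visitsBeforeGeomExp P a b lam := by
  classical
  have hVE : visitsBeforeExp P a b = ∑' t, MCStmt7.fA P a b t := rfl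
  have hVG : visitsBeforeGeomExp P a b lam = ∑' t, (1-lam)^t * MCStmt7.fA P a b t := rfl
  have hHP : hitBeforeGeomProb P a b lam = ∑' t, (1-lam)^(t+1) * MCStmt7.gB P a b t := rfl
  set f : ℕ → ℝ := MCStmt7.fA P a b with hf_def
  set g : ℕ → ℝ := MCStmt7.gB P a b with hg_def
  set F : ℕ → ℝ := MCStmt7.FF P a b with hF_def
  have hf0 : ∀ t, 0 ≤ f t := MCStmt7.fA_nonneg P a b hnn
  have hg0 : ∀ t, 0 ≤ g t := MCStmt7.gB_nonneg P a b hnn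
  have hF0 : ∀ m, 0 ≤ F m := MCStmt7.FF_nonneg P a b hnn
  have hf1 : ∀ t, f t ≤ 1 := MCStmt7.fA_le_one P a b hnn hrow
  have hg1 : ∀ t, g t ≤ 1 := MCStmt7.gB_le_one P a b hnn hrow
  have hF1 : ∀ m, F m ≤ 1 := MCStmt7.FF_le_one P a b hnn hrow
  have h1l0 : (0:ℝ) ≤ 1 - lam := by linarith
  have h1l1 : (1:ℝ) - lam < 1 := by linarith
  have hpow1 : ∀ t : ℕ, (1-lam)^t ≤ 1 := fun t => pow_le_one₀ h1l0 (by linarith)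
  have hpow0 : ∀ t : ℕ, (0:ℝ) ≤ (1-lam)^t := fun t => pow_nonneg h1l0 t
  have hG0 : 0 ≤ ∑' t, (1-lam)^t * f t :=
    tsum_nonneg fun t => mul_nonneg (hpow0 t) (hf0 t)
  by_cases hfs : Summable f
  case neg =>
    rw [hVE, hVG, tsum_eq_zero_of_not_summable hfs]
    linarith
  case pos =>
  -- summability facts
  have hgeom : Summable (fun m : ℕ => (1-lam)^m) := summable_geometric_of_lt_one h1l0 h1l1
  have hgeoml : Summable (fun m : ℕ => lam * (1-lam)^m) := hgeom.mul_left lam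
  have hGsum : Summable (fun t => (1-lam)^t * f t) :=
    Summable.of_nonneg_of_le (fun t => mul_nonneg (hpow0 t) (hf0 t))
      (fun t => mul_le_of_le_one_left (hf0 t) (hpow1 t)) hfs
  have hgsum : Summable g := by
    refine summable_of_sum_range_le hg0 (c := 1) fun n => ?_
    calc ∑ s ∈ Finset.range n, g s ≤ ∑ s ∈ Finset.range (n+1), g s :=
          Finset.sum_le_sum_of_subset_of_nonneg
            (Finset.range_subset_range.mpr (by omega)) (fun i _ _ => hg0 i)
      _ ≤ 1 - F n := MCStmt7.sum_gB_le P a b hnn hrow n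
      _ ≤ 1 := by linarith [hF0 n]
  have hcsum : Summable (fun s => (1-lam)^(s+1) * g s) :=
    Summable.of_nonneg_of_le (fun s => mul_nonneg (hpow0 (s+1)) (hg0 s))
      (fun s => mul_le_of_le_one_left (hg0 s) (hpow1 (s+1))) hgsum
  have hFgeo : Summable (fun m => lam * (1-lam)^m * F m) :=
    Summable.of_nonneg_of_le
      (fun m => mul_nonneg (mul_nonneg hlam0.le (hpow0 m)) (hF0 m))
      (fun m => mul_le_of_le_one_right (mul_nonneg hlam0.le (hpow0 m)) (hF1 m)) hgeoml
  set S : ℝ := ∑' t, f t with hS_def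
  set G : ℝ := ∑' t, (1-lam)^t * f t with hG_def
  set c : ℝ := ∑' s, (1-lam)^(s+1) * g s with hc_def
  have hS0 : 0 ≤ S := tsum_nonneg hf0
  -- Claim 1 : finite tail bound
  have claim1 : ∀ m N : ℕ, ∑ t ∈ Finset.Ico (m+1) N, f t ≤ F m * S := by
    intro m N
    have step1 : ∑ t ∈ Finset.Ico (m+1) N, f t
        ≤ ∑ t ∈ Finset.Ico (m+1) N, ∑ r ∈ Finset.Icc m t, MCStmt7.qQ P a b m r * f (t - r) := by
      refine Finset.sum_le_sum fun t ht => ?_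
      exact MCStmt7.fA_le_sum P a b hnn (by
        have := (Finset.mem_Ico.mp ht).1; omega)
    refine le_trans step1 ?_
    rw [Finset.sum_sigma' (Finset.Ico (m+1) N) (fun t => Finset.Icc m t)
      (fun t r => MCStmt7.qQ P a b m r * f (t - r))]
    have himg : ∑ p ∈ (Finset.Ico (m+1) N).sigma (fun t => Finset.Icc m t),
          MCStmt7.qQ P a b m p.2 * f (p.1 - p.2)
        = ∑ p ∈ ((Finset.Ico (m+1) N).sigma (fun t => Finset.Icc m t)).image
            (fun p : Σ _ : ℕ, ℕ => (p.2, p.1 - p.2)),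
          MCStmt7.qQ P a b m p.1 * f p.2 := by
      rw [Finset.sum_image]
      intro p hp q hq hpq
      rcases p with ⟨p1, p2⟩
      rcases q with ⟨q1, q2⟩
      have hp2 : p2 ≤ p1 := (Finset.mem_Icc.mp (Finset.mem_sigma.mp hp).2).2
      have hq2 : q2 ≤ q1 := (Finset.mem_Icc.mp (Finset.mem_sigma.mp hq).2).2
      have h1 : p2 = q2 := congrArg Prod.fst hpq
      have h2 : p1 - p2 = q1 - q2 := congrArg Prod.snd hpq
      have h3 : p1 = q1 := by omega
      subst h3
      subst h1
      rfl
    rw [himg]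
    have hsub : ((Finset.Ico (m+1) N).sigma (fun t => Finset.Icc m t)).image
          (fun p : Σ _ : ℕ, ℕ => (p.2, p.1 - p.2)) ⊆ (Finset.Icc m N) ×ˢ (Finset.range N) := by
      intro q hq
      obtain ⟨p, hp, rfl⟩ := Finset.mem_image.mp hq
      obtain ⟨hp1, hp2⟩ := Finset.mem_sigma.mp hp
      obtain ⟨hp1a, hp1b⟩ := Finset.mem_Ico.mp hp1
      obtain ⟨hp2a, hp2b⟩ := Finset.mem_Icc.mp hp2
      refine Finset.mem_product.mpr ⟨Finset.mem_Icc.mpr ⟨hp2a, by omega⟩,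
        Finset.mem_range.mpr (by omega)⟩
    refine le_trans (Finset.sum_le_sum_of_subset_of_nonneg hsub
      (fun q _ _ => mul_nonneg (MCStmt7.qQ_nonneg P a b hnn m q.1) (hf0 q.2))) ?_
    rw [Finset.sum_product]
    have : ∑ r ∈ Finset.Icc m N, ∑ u ∈ Finset.range N, MCStmt7.qQ P a b m r * f u
        = (∑ r ∈ Finset.Icc m N, MCStmt7.qQ P a b m r) * (∑ u ∈ Finset.range N, f u) := by
      rw [Finset.sum_mul]
      exact Finset.sum_congr rfl fun r _ => by rw [Finset.mul_sum]
    rw [this]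
    refine mul_le_mul (MCStmt7.sum_qQ_le P a b hnn hrow m N)
      (hfs.sum_le_tsum _ (fun i _ => hf0 i))
      (Finset.sum_nonneg fun i _ => hf0 i) (hF0 m)
  -- Claim 2 : S - G ≤ B * S
  have claim2 : S - G ≤ (∑' m, lam * (1-lam)^m * F m) * S := by
    rw [hS_def, hG_def, ← hfs.tsum_sub hGsum]
    refine (hfs.sub hGsum).tsum_le_of_sum_le fun I => ?_
    obtain ⟨N, hIN⟩ := Finset.exists_nat_subset_range I
    have hterm0 : ∀ t : ℕ, 0 ≤ f t - (1-lam)^t * f t := fun t => by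
      have := mul_le_of_le_one_left (hf0 t) (hpow1 t); linarith
    refine le_trans (Finset.sum_le_sum_of_subset_of_nonneg hIN fun t _ _ => hterm0 t) ?_
    have hgeo_fin : ∀ t : ℕ, ∑ m ∈ Finset.range t, lam * (1-lam)^m = 1 - (1-lam)^t := by
      intro t
      have h := geom_sum_mul (1-lam) t
      rw [← Finset.mul_sum]
      linear_combination -h
    have hrewr : ∀ t : ℕ, f t - (1-lam)^t * f t
        = ∑ m ∈ Finset.range t, lam * (1-lam)^m * f t := by
      intro t
      rw [← Finset.sum_mul, hgeo_fin t]
      ring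
    rw [Finset.sum_congr rfl fun t _ => hrewr t]
    have hswap : ∑ t ∈ Finset.range N, ∑ m ∈ Finset.range t, lam * (1-lam)^m * f t
        = ∑ m ∈ Finset.range N, ∑ t ∈ Finset.Ico (m+1) N, lam * (1-lam)^m * f t := by
      simp only [Finset.range_eq_Ico]
      rw [← Finset.sum_Ico_Ico_comm' 0 N (fun m t => lam * (1-lam)^m * f t)]
    rw [hswap]
    have hin : ∀ m ∈ Finset.range N, ∑ t ∈ Finset.Ico (m+1) N, lam * (1-lam)^m * f t
        ≤ lam * (1-lam)^m * (F m * S) := by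
      intro m _
      rw [← Finset.mul_sum]
      exact mul_le_mul_of_nonneg_left (claim1 m N) (mul_nonneg hlam0.le (hpow0 m))
    refine le_trans (Finset.sum_le_sum hin) ?_
    have hfac : ∑ m ∈ Finset.range N, lam * (1-lam)^m * (F m * S)
        = (∑ m ∈ Finset.range N, lam * (1-lam)^m * F m) * S := by
      rw [Finset.sum_mul]
      exact Finset.sum_congr rfl fun m _ => by ring
    rw [hfac]
    exact mul_le_mul_of_nonneg_right (hFgeo.sum_le_tsum _
      (fun m _ => mul_nonneg (mul_nonneg hlam0.le (hpow0 m)) (hF0 m))) hS0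
  -- Claim 3 : B ≤ 1 - c
  set GG : ℕ → ℝ := fun m => ∑ s ∈ Finset.range (m+1), g s with hGG_def
  have hGG0 : ∀ m, 0 ≤ GG m := fun m => Finset.sum_nonneg fun s _ => hg0 s
  have hFGG : ∀ m, F m ≤ 1 - GG m := fun m => by
    have := MCStmt7.sum_gB_le P a b hnn hrow m
    rw [hGG_def]
    dsimp only
    linarith [this]
  have hGG1 : ∀ m, GG m ≤ 1 := fun m => by linarith [hFGG m, hF0 m]
  have hDsum : Summable (fun m => lam * (1-lam)^m * GG m) :=
    Summable.of_nonneg_of_le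
      (fun m => mul_nonneg (mul_nonneg hlam0.le (hpow0 m)) (hGG0 m))
      (fun m => mul_le_of_le_one_right (mul_nonneg hlam0.le (hpow0 m)) (hGG1 m)) hgeoml
  have hRsum : Summable (fun m => lam * (1-lam)^m * (1 - GG m)) := by
    have heq : (fun m => lam * (1-lam)^m * (1 - GG m))
        = fun m => lam * (1-lam)^m - lam * (1-lam)^m * GG m := by
      funext m; ring
    rw [heq]
    exact hgeoml.sub hDsum
  have hB_le : (∑' m, lam * (1-lam)^m * F m) ≤ ∑' m, lam * (1-lam)^m * (1 - GG m) :=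
    hFgeo.tsum_le_tsum (fun m => mul_le_mul_of_nonneg_left (hFGG m)
      (mul_nonneg hlam0.le (hpow0 m))) hRsum
  have hone : (∑' m : ℕ, lam * (1-lam)^m) = 1 := by
    rw [tsum_mul_left, tsum_geometric_of_lt_one h1l0 h1l1,
      show (1:ℝ) - (1 - lam) = lam by ring, mul_inv_cancel₀ (ne_of_gt hlam0)]
  have hsplit : (∑' m, lam * (1-lam)^m * (1 - GG m))
      = 1 - ∑' m, lam * (1-lam)^m * GG m := by
    calc (∑' m, lam * (1-lam)^m * (1 - GG m))
        = ∑' m, (lam * (1-lam)^m - lam * (1-lam)^m * GG m) :=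
          tsum_congr fun m => by ring
      _ = (∑' m : ℕ, lam * (1-lam)^m) - ∑' m, lam * (1-lam)^m * GG m :=
          hgeoml.tsum_sub hDsum
      _ = 1 - ∑' m, lam * (1-lam)^m * GG m := by rw [hone]
  set D : ℝ := ∑' m, lam * (1-lam)^m * GG m with hD_def
  set H : ℕ × ℕ → ℝ := fun p => if p.2 ≤ p.1 then lam * (1-lam)^p.1 * g p.2 else 0 with hH_def
  have hH0 : ∀ p, 0 ≤ H p := by
    intro p
    rw [hH_def]
    dsimp only
    split
    · exact mul_nonneg (mul_nonneg hlam0.le (hpow0 _)) (hg0 _)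
    · exact le_refl 0
  have hK : Summable (fun p : ℕ × ℕ => (lam * (1-lam)^p.1) * g p.2) :=
    Summable.mul_of_nonneg hgeoml hgsum
      (fun m => mul_nonneg hlam0.le (hpow0 m)) hg0
  have hHsum : Summable H := by
    refine Summable.of_nonneg_of_le hH0 (fun p => ?_) hK
    rw [hH_def]
    dsimp only
    split
    · exact le_refl _
    · exact mul_nonneg (mul_nonneg hlam0.le (hpow0 _)) (hg0 _)
  have hinner_fin : ∀ m : ℕ, (∑' s, H (m, s)) = lam * (1-lam)^m * GG m := by
    intro m
    rw [tsum_eq_sum (s := Finset.range (m+1)) (f := fun s => H (m, s)) (fun s hs => by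
      rw [hH_def]
      dsimp only
      rw [if_neg]
      have hx : ¬ s < m+1 := fun hcon => hs (Finset.mem_range.mpr hcon)
      omega)]
    rw [hGG_def]
    dsimp only
    rw [Finset.mul_sum]
    refine Finset.sum_congr rfl fun s hs => ?_
    rw [hH_def]
    dsimp only
    rw [if_pos (by have := Finset.mem_range.mp hs; omega)]
  have hDeq : D = ∑' p : ℕ × ℕ, H p := by
    have h1 : (∑' p : ℕ × ℕ, H p) = ∑' m, ∑' s, H (m, s) :=
      hHsum.tsum_prod' (fun m => hHsum.prod_factor m)
    rw [hD_def, h1]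
    exact tsum_congr fun m => (hinner_fin m).symm
  have hswap2 : (∑' p : ℕ × ℕ, H p) = ∑' s, ∑' m, H (m, s) := by
    have hswH : Summable (fun c : ℕ × ℕ => H ((Equiv.prodComm ℕ ℕ) c)) :=
      ((Equiv.prodComm ℕ ℕ).summable_iff (f := H)).mpr hHsum
    calc (∑' p : ℕ × ℕ, H p) = ∑' c : ℕ × ℕ, H ((Equiv.prodComm ℕ ℕ) c) :=
          ((Equiv.prodComm ℕ ℕ).tsum_eq H).symm
      _ = ∑' s, ∑' m, H ((Equiv.prodComm ℕ ℕ) (s, m)) :=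
          hswH.tsum_prod' (fun s => hswH.prod_factor s)
      _ = ∑' s, ∑' m, H (m, s) := by
          exact tsum_congr fun s => tsum_congr fun m => rfl
  have hinner2 : ∀ s : ℕ, (∑' m, H (m, s)) = (1-lam)^s * g s := by
    intro s
    have hinj : Function.Injective (fun k : ℕ => k + s) := add_left_injective s
    have hsupp : Function.support (fun m => H (m, s)) ⊆ Set.range (fun k : ℕ => k + s) := by
      intro m hm
      by_contra hr
      apply hm
      rw [hH_def]
      dsimp only
      rw [if_neg]
      intro hsm
      exact hr ⟨m - s, by dsimp only; omega⟩
    rw [← Function.Injective.tsum_eq hinj hsupp]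
    have hterm : ∀ k : ℕ, H (k + s, s) = (lam * ((1-lam)^s * g s)) * (1-lam)^k := by
      intro k
      rw [hH_def]
      dsimp only
      rw [if_pos (by omega), pow_add]
      ring
    rw [tsum_congr hterm, tsum_mul_left, tsum_geometric_of_lt_one h1l0 h1l1,
      show (1:ℝ) - (1 - lam) = lam by ring]
    rw [show lam * ((1-lam)^s * g s) * lam⁻¹ = ((1-lam)^s * g s) * (lam * lam⁻¹) by ring,
      mul_inv_cancel₀ (ne_of_gt hlam0), mul_one]
  have hDsum2 : Summable (fun s => (1-lam)^s * g s) :=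
    Summable.of_nonneg_of_le (fun s => mul_nonneg (hpow0 s) (hg0 s))
      (fun s => mul_le_of_le_one_left (hg0 s) (hpow1 s)) hgsum
  have hcD : c ≤ D := by
    have hD2 : D = ∑' s, (1-lam)^s * g s := by
      rw [hDeq, hswap2]
      exact tsum_congr hinner2
    rw [hc_def, hD2]
    refine hcsum.tsum_le_tsum (fun s => ?_) hDsum2
    exact mul_le_mul_of_nonneg_right
      (pow_le_pow_of_le_one h1l0 (by linarith) (by omega)) (hg0 s)
  have claim3 : (∑' m, lam * (1-lam)^m * F m) ≤ 1 - c := by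
    calc (∑' m, lam * (1-lam)^m * F m) ≤ ∑' m, lam * (1-lam)^m * (1 - GG m) := hB_le
      _ = 1 - D := by rw [hsplit]
      _ ≤ 1 - c := by linarith
  -- conclusion
  have hc2 : 1/2 ≤ c := by rw [hHP] at hhalf; exact hhalf
  have hfinal : S - G ≤ (1 - c) * S :=
    le_trans claim2 (mul_le_mul_of_nonneg_right claim3 hS0)
  have hcS : c * S ≤ G := by
    have hring : (1 - c) * S = S - c * S := by ring
    linarith [hfinal, hring]
  have hgoal : S ≤ 2 * G := by
    have h2 : 0 ≤ (2 * c - 1) * S := mul_nonneg (by linarith) hS0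
    have h3 : (2 * c - 1) * S = 2 * (c * S) - S := by ring
    linarith [hcS, h2, h3]
  rw [hVE, hVG]
  exact hgoal
end

section
/- Suppose there exist constants C > 0 and c ∈ (0,1) such that for all k ≤ t_cov, P_{π⊗k}(τ_cov(k) ≤ ⌈C·t_cov/k⌉) ≥ c, where τ_cov(k) is the cover time by k independent π-started copies of the chain. Then for every 1 ≤ ℓ ≤ k, P_{π⊗k}(τ_cov(k) ≥ ℓ·⌈C·t_cov/k⌉) ≤ (1−c)^{⌊ℓ/2⌋}. -/
open scoped BigOperators

/-- `P_x(τ_cov > t)`: the chain started at `x` has not visited every state by time `t`. -/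
noncomputable def coverTail {V : Type*} [Fintype V] (P : V → V → ℝ) (x : V) (t : ℕ) : ℝ :=
  pathSum P x t (fun w => ¬ ∀ v : V, ∃ i, w i = v)

/-- `E_x[τ_cov]`, the expected cover time started from `x`. -/
noncomputable def expCov {V : Type*} [Fintype V] (P : V → V → ℝ) (x : V) : ℝ :=
  ∑' t : ℕ, coverTail P x t

/-- `t_cov = max_x E_x[τ_cov]`. -/
noncomputable def tcov {V : Type*} [Fintype V] [Nonempty V] (P : V → V → ℝ) : ℝ :=
  ⨆ x : V, expCov P x

/-- `P_{π⊗k}(τ_cov(k) > t)`: the probability that `k` independent copies of the chain,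
each started from an independent `π`-distributed state, have not jointly visited every
state of `V` by time `t`. -/
noncomputable def multiCoverTail {V : Type*} [Fintype V] (P : V → V → ℝ) (π : V → ℝ)
    (k t : ℕ) : ℝ :=
  ∑ x0 : Fin k → V, (∏ i, π (x0 i)) *
    pathSum (fun a b : Fin k → V => ∏ i, P (a i) (b i)) x0 t
      (fun w => ¬ ∀ v : V, ∃ (i : Fin k) (t' : Fin (t+1)), w t' i = v)

-- AUX SECTION (inserted before theorem)
section Aux
open Classical in
/-- Joint-chain form of `multiCoverTail`. -/
noncomputable def jointCT {V : Type*} [Fintype V] (P : V → V → ℝ) (π : V → ℝ)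
    (k t : ℕ) : ℝ :=
  ∑ w : Fin (t+1) → (Fin k → V),
    if ∀ v : V, ∃ (i : Fin k) (s : Fin (t+1)), w s i = v then 0
    else (∏ i, π (w 0 i)) * ∏ s : Fin t, (∏ i, P (w s.castSucc i) (w s.succ i))

open Classical in
/-- Walk-indexed form of `multiCoverTail`. -/
noncomputable def mct' {V : Type*} [Fintype V] (P : V → V → ℝ) (π : V → ℝ)
    (k t : ℕ) : ℝ :=
  ∑ ω : Fin k → Fin (t+1) → V,
    if ∀ v : V, ∃ (i : Fin k) (s : Fin (t+1)), ω i s = v then 0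
    else ∏ i, (π (ω i 0) * ∏ s : Fin t, P (ω i s.castSucc) (ω i s.succ))

noncomputable def sw {V : Type*} [Fintype V] (P : V → V → ℝ) (π : V → ℝ) (t : ℕ)
    (u : Fin (t+1) → V) : ℝ :=
  π (u 0) * ∏ s : Fin t, P (u s.castSucc) (u s.succ)

variable {V : Type*} [Fintype V]

lemma sumHead (P : V → V → ℝ) (hrow : ∀ x, ∑ y, P x y = 1) :
    ∀ (t : ℕ) (f : V → ℝ),
      (∑ u : Fin (t+1) → V, f (u 0) * ∏ s : Fin t, P (u s.castSucc) (u s.succ)) = ∑ x, f x := by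
  intro t
  induction t with
  | zero =>
    intro f
    simpa using (Equiv.sum_comp (Equiv.funUnique (Fin 1) V).symm
      (fun u : Fin 1 → V => f (u 0) * ∏ s : Fin 0, P (u s.castSucc) (u s.succ))).symm
  | succ n ih =>
    intro f
    set e := Fin.consEquiv (fun _ : Fin (n+2) => V) with hedef
    rw [← Equiv.sum_comp e (fun u : Fin (n+2) → V =>
      f (u 0) * ∏ s : Fin (n+1), P (u s.castSucc) (u s.succ))]
    rw [Fintype.sum_prod_type]
    have he : ∀ (x : V) (v : Fin (n+1) → V), (e (x, v)) = (Fin.cons x v : Fin (n+2) → V) :=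
      fun _ _ => rfl
    simp only [he]
    have key : ∀ (x : V) (v : Fin (n+1) → V),
        (∏ s : Fin (n+1), P ((Fin.cons x v : Fin (n+2) → V) s.castSucc)
          ((Fin.cons x v : Fin (n+2) → V) s.succ))
        = P x (v 0) * ∏ s : Fin n, P (v s.castSucc) (v s.succ) := by
      intro x v
      rw [Fin.prod_univ_succ]
      have h1 : (Fin.cons x v : Fin (n+2) → V) ((0 : Fin (n+1)).castSucc) = x := by
        rw [Fin.castSucc_zero, Fin.cons_zero]
      have h2 : (Fin.cons x v : Fin (n+2) → V) ((0 : Fin (n+1)).succ) = v 0 := by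
        rw [Fin.cons_succ]
      rw [h1, h2]
      congr 1
    calc (∑ x : V, ∑ v : Fin (n+1) → V,
            f ((Fin.cons x v : Fin (n+2) → V) 0) * ∏ s : Fin (n+1),
              P ((Fin.cons x v : Fin (n+2) → V) s.castSucc) ((Fin.cons x v : Fin (n+2) → V) s.succ))
        = ∑ x : V, f x * ∑ v : Fin (n+1) → V, P x (v 0) * ∏ s : Fin n, P (v s.castSucc) (v s.succ) := by
          apply Finset.sum_congr rfl; intro x _
          rw [Finset.mul_sum]
          apply Finset.sum_congr rfl; intro v _
          rw [key, Fin.cons_zero]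
      _ = ∑ x : V, f x := by
          apply Finset.sum_congr rfl; intro x _
          rw [ih (fun y => P x y), hrow x, mul_one]

lemma marg {W : Type*} [Fintype W] (Q : W → W → ℝ) (hQ : ∀ a, ∑ b, Q a b = 1)
    (t : ℕ) (f : (Fin (t+1) → W) → ℝ) :
    (∑ w : Fin (t+2) → W, f (w ∘ Fin.castSucc) * ∏ s : Fin (t+1), Q (w s.castSucc) (w s.succ))
    = ∑ u : Fin (t+1) → W, f u * ∏ s : Fin t, Q (u s.castSucc) (u s.succ) := by
  set e := Fin.snocEquiv (fun _ : Fin (t+2) => W) with hedef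
  rw [← Equiv.sum_comp e (fun w : Fin (t+2) → W =>
    f (w ∘ Fin.castSucc) * ∏ s : Fin (t+1), Q (w s.castSucc) (w s.succ))]
  rw [Fintype.sum_prod_type]
  have he : ∀ (y : W) (u : Fin (t+1) → W), e (y, u) = (Fin.snoc u y : Fin (t+2) → W) := by
    intro y u; funext i; rfl
  simp only [he]
  rw [Finset.sum_comm]
  apply Finset.sum_congr rfl
  intro u _
  have hres : ∀ y : W, (Fin.snoc u y : Fin (t+2) → W) ∘ Fin.castSucc = u := by
    intro y; funext i; simp [Fin.snoc_castSucc]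
  have hprod : ∀ y : W,
      (∏ s : Fin (t+1), Q ((Fin.snoc u y : Fin (t+2) → W) s.castSucc)
        ((Fin.snoc u y : Fin (t+2) → W) s.succ))
      = (∏ s : Fin t, Q (u s.castSucc) (u s.succ)) * Q (u (Fin.last t)) y := by
    intro y
    rw [Fin.prod_univ_castSucc]
    congr 1
    · apply Finset.prod_congr rfl
      intro s _
      congr 1
      · rw [Fin.snoc_castSucc]
      · rw [Fin.succ_castSucc, Fin.snoc_castSucc]
    · rw [Fin.succ_last, Fin.snoc_last, Fin.snoc_castSucc]
  calc (∑ y : W, f ((Fin.snoc u y : Fin (t+2) → W) ∘ Fin.castSucc) *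
          ∏ s : Fin (t+1), Q ((Fin.snoc u y : Fin (t+2) → W) s.castSucc)
            ((Fin.snoc u y : Fin (t+2) → W) s.succ))
      = ∑ y : W, f u * ((∏ s : Fin t, Q (u s.castSucc) (u s.succ)) * Q (u (Fin.last t)) y) := by
        apply Finset.sum_congr rfl
        intro y _
        rw [hres, hprod]
    _ = f u * ∏ s : Fin t, Q (u s.castSucc) (u s.succ) := by
        rw [← Finset.mul_sum, ← Finset.mul_sum, hQ, mul_one]

lemma jointEq (P : V → V → ℝ) (π : V → ℝ) (k t : ℕ) :
    multiCoverTail P π k t = jointCT P π k t := by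
  classical
  unfold multiCoverTail pathSum jointCT
  simp only [Finset.mul_sum]
  rw [Finset.sum_comm]
  apply Finset.sum_congr rfl
  intro w _
  by_cases hA : ∀ v : V, ∃ (i : Fin k) (s : Fin (t+1)), w s i = v
  · rw [if_pos hA]
    apply Finset.sum_eq_zero
    intro x0 _
    have hcond : ¬ (w 0 = x0 ∧ ¬ ∀ v : V, ∃ (i : Fin k) (t' : Fin (t+1)), w t' i = v) := by
      intro hcon
      exact hcon.2 hA
    rw [if_neg hcond, mul_zero]
  · rw [if_neg hA]
    rw [Finset.sum_eq_single (w 0)]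
    · rw [if_pos ⟨rfl, hA⟩]
    · intro x0 _ hne
      have hcond : ¬ (w 0 = x0 ∧ ¬ ∀ v : V, ∃ (i : Fin k) (t' : Fin (t+1)), w t' i = v) := by
        intro hcon
        exact hne hcon.1.symm
      rw [if_neg hcond, mul_zero]
    · intro habs
      exact absurd (Finset.mem_univ _) habs

lemma bridge (P : V → V → ℝ) (π : V → ℝ) (k t : ℕ) :
    jointCT P π k t = mct' P π k t := by
  classical
  unfold jointCT mct'
  rw [← Equiv.sum_comp (Equiv.piComm (fun (_ : Fin k) (_ : Fin (t+1)) => V))]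
  apply Finset.sum_congr rfl
  intro ω _
  have he : ∀ (s : Fin (t+1)) (i : Fin k),
      (Equiv.piComm (fun (_ : Fin k) (_ : Fin (t+1)) => V)) ω s i = ω i s := fun _ _ => rfl
  simp only [he]
  by_cases hcov : ∀ v : V, ∃ (i : Fin k) (s : Fin (t+1)), ω i s = v
  · rw [if_pos hcov, if_pos hcov]
  · rw [if_neg hcov, if_neg hcov, Finset.prod_mul_distrib]
    congr 1
    exact Finset.prod_comm

lemma mctEq (P : V → V → ℝ) (π : V → ℝ) (k t : ℕ) :
    multiCoverTail P π k t = mct' P π k t :=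
  (jointEq P π k t).trans (bridge P π k t)

lemma mct_nonneg (P : V → V → ℝ) (π : V → ℝ) (hnnP : ∀ x y, 0 ≤ P x y) (hπ : ∀ x, 0 ≤ π x)
    (k t : ℕ) : 0 ≤ multiCoverTail P π k t := by
  classical
  rw [jointEq]
  unfold jointCT
  apply Finset.sum_nonneg
  intro w _
  split
  · exact le_refl _
  · exact mul_nonneg (Finset.prod_nonneg fun _ _ => hπ _)
      (Finset.prod_nonneg fun _ _ => Finset.prod_nonneg fun _ _ => hnnP _ _)

lemma mct_step (P : V → V → ℝ) (π : V → ℝ) (hnnP : ∀ x y, 0 ≤ P x y) (hπ : ∀ x, 0 ≤ π x)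
    (hrow : ∀ x, ∑ y, P x y = 1) (k t : ℕ) :
    multiCoverTail P π k (t+1) ≤ multiCoverTail P π k t := by
  classical
  rw [jointEq, jointEq]
  have hQrow : ∀ a : Fin k → V, ∑ b : Fin k → V, ∏ i, P (a i) (b i) = 1 := by
    intro a
    rw [← Fintype.prod_sum (fun (i : Fin k) (y : V) => P (a i) y)]
    rw [Finset.prod_congr rfl (fun i _ => hrow (a i)), Finset.prod_const_one]
  set f : (Fin (t+1) → (Fin k → V)) → ℝ := fun u =>
    if ∀ v : V, ∃ (i : Fin k) (s : Fin (t+1)), u s i = v then 0 else ∏ i, π (u 0 i) with hf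
  calc jointCT P π k (t+1)
      ≤ ∑ w : Fin (t+2) → (Fin k → V),
          f (w ∘ Fin.castSucc) * ∏ s : Fin (t+1), ∏ i, P (w s.castSucc i) (w s.succ i) := by
        rw [show jointCT P π k (t+1) = ∑ w : Fin (t+2) → (Fin k → V),
          (if ∀ v : V, ∃ (i : Fin k) (s : Fin (t+2)), w s i = v then 0
           else (∏ i, π (w 0 i)) * ∏ s : Fin (t+1), (∏ i, P (w s.castSucc i) (w s.succ i)))
          from rfl]
        apply Finset.sum_le_sum
        intro w _
        have h00 : (w ∘ Fin.castSucc) 0 = w 0 := by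
          show w (Fin.castSucc 0) = w 0
          rw [Fin.castSucc_zero]
        by_cases hc : ∀ v : V, ∃ (i : Fin k) (s : Fin (t+1)), (w ∘ Fin.castSucc) s i = v
        · have hc2 : ∀ v : V, ∃ (i : Fin k) (s : Fin (t+2)), w s i = v := by
            intro v
            obtain ⟨i, s, hs⟩ := hc v
            exact ⟨i, s.castSucc, hs⟩
          rw [if_pos hc2, hf]
          simp only [if_pos hc, zero_mul, le_refl]
        · rw [hf]
          simp only [if_neg hc, h00]
          have hAB : (0:ℝ) ≤ (∏ i, π (w 0 i)) *
              ∏ s : Fin (t+1), ∏ i, P (w s.castSucc i) (w s.succ i) :=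
            mul_nonneg (Finset.prod_nonneg fun _ _ => hπ _)
              (Finset.prod_nonneg fun _ _ => Finset.prod_nonneg fun _ _ => hnnP _ _)
          split
          · exact hAB
          · exact le_refl _
    _ = ∑ u : Fin (t+1) → (Fin k → V),
          f u * ∏ s : Fin t, ∏ i, P (u s.castSucc i) (u s.succ i) :=
        marg (fun a b : Fin k → V => ∏ i, P (a i) (b i)) hQrow t f
    _ = jointCT P π k t := by
        rw [show jointCT P π k t = ∑ u : Fin (t+1) → (Fin k → V),
          (if ∀ v : V, ∃ (i : Fin k) (s : Fin (t+1)), u s i = v then 0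
           else (∏ i, π (u 0 i)) * ∏ s : Fin t, (∏ i, P (u s.castSucc i) (u s.succ i)))
          from rfl]
        apply Finset.sum_congr rfl
        intro u _
        rw [hf]
        rw [ite_mul, zero_mul]

lemma mct_mono (P : V → V → ℝ) (π : V → ℝ) (hnnP : ∀ x y, 0 ≤ P x y) (hπ : ∀ x, 0 ≤ π x)
    (hrow : ∀ x, ∑ y, P x y = 1) (k : ℕ) {t1 t2 : ℕ} (h : t1 ≤ t2) :
    multiCoverTail P π k t2 ≤ multiCoverTail P π k t1 := by
  induction t2, h using Nat.le_induction with
  | base => exact le_refl _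
  | succ n hn ih => exact (mct_step P π hnnP hπ hrow k n).trans ih

lemma sw_nonneg (P : V → V → ℝ) (π : V → ℝ) (hnnP : ∀ x y, 0 ≤ P x y) (hπ : ∀ x, 0 ≤ π x)
    (t : ℕ) (u : Fin (t+1) → V) : 0 ≤ sw P π t u :=
  mul_nonneg (hπ _) (Finset.prod_nonneg fun _ _ => hnnP _ _)

lemma sw_sum (P : V → V → ℝ) (π : V → ℝ) (hrow : ∀ x, ∑ y, P x y = 1) (hπ1 : ∑ x, π x = 1)
    (t : ℕ) : ∑ u : Fin (t+1) → V, sw P π t u = 1 := by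
  rw [show (∑ u : Fin (t+1) → V, sw P π t u)
    = ∑ u : Fin (t+1) → V, π (u 0) * ∏ s : Fin t, P (u s.castSucc) (u s.succ) from rfl]
  rw [sumHead P hrow t π, hπ1]

lemma grouping (P : V → V → ℝ) (π : V → ℝ) (hnnP : ∀ x y, 0 ≤ P x y) (hπ : ∀ x, 0 ≤ π x)
    (hrow : ∀ x, ∑ y, P x y = 1) (hπ1 : ∑ x, π x = 1)
    (g m k t : ℕ) (hgm : g * m ≤ k) :
    mct' P π k t ≤ (mct' P π m t) ^ g := by
  classical
  have hk : g * m + (k - g * m) = k := Nat.add_sub_cancel' hgm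
  set r := k - g * m with hr
  let E : Fin k ≃ (Fin g × Fin m) ⊕ Fin r :=
    ((finCongr hk.symm).trans finSumFinEquiv.symm).trans
      (Equiv.sumCongr finProdFinEquiv.symm (Equiv.refl _))
  let myE : ((Fin g → Fin m → (Fin (t+1) → V)) × (Fin r → (Fin (t+1) → V)))
      ≃ (Fin k → (Fin (t+1) → V)) :=
    { toFun := fun p i => Sum.elim (fun q => p.1 q.1 q.2) p.2 (E i)
      invFun := fun ν => (fun j a => ν (E.symm (Sum.inl (j, a))), fun x => ν (E.symm (Sum.inr x)))
      left_inv := by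
        intro p
        refine Prod.ext ?_ ?_
        · funext j a; simp
        · funext x; simp
      right_inv := by
        intro ν
        funext i
        rcases hEi : E i with q | x
        · have : E.symm (Sum.inl q) = i := by rw [← hEi, Equiv.symm_apply_apply]
          simp [hEi, this]
        · have : E.symm (Sum.inr x) = i := by rw [← hEi, Equiv.symm_apply_apply]
          simp [hEi, this] }
  have step1 : mct' P π k t ≤ ∑ ν : Fin k → Fin (t+1) → V,
      (∏ j : Fin g, (if ∀ v : V, ∃ (a : Fin m) (s : Fin (t+1)),
          ν (E.symm (Sum.inl (j, a))) s = v then (0:ℝ) else 1)) * ∏ i, sw P π t (ν i) := by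
    rw [show mct' P π k t = ∑ ν : Fin k → Fin (t+1) → V,
      (if ∀ v : V, ∃ (i : Fin k) (s : Fin (t+1)), ν i s = v then 0
       else ∏ i, sw P π t (ν i)) from rfl]
    apply Finset.sum_le_sum
    intro ν _
    by_cases hcov : ∀ v : V, ∃ (i : Fin k) (s : Fin (t+1)), ν i s = v
    · rw [if_pos hcov]
      apply mul_nonneg
      · apply Finset.prod_nonneg; intro j _; split <;> norm_num
      · exact Finset.prod_nonneg fun i _ => sw_nonneg P π hnnP hπ t _
    · rw [if_neg hcov]
      have hone : ∀ j : Fin g, (if ∀ v : V, ∃ (a : Fin m) (s : Fin (t+1)),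
          ν (E.symm (Sum.inl (j, a))) s = v then (0:ℝ) else 1) = 1 := by
        intro j
        rw [if_neg]
        intro hj
        exact hcov (fun v => ⟨E.symm (Sum.inl (j, (hj v).choose)), (hj v).choose_spec⟩)
      rw [Finset.prod_congr rfl (fun j _ => hone j), Finset.prod_const_one, one_mul]
  have step2 : (∑ ν : Fin k → Fin (t+1) → V,
      (∏ j : Fin g, (if ∀ v : V, ∃ (a : Fin m) (s : Fin (t+1)),
          ν (E.symm (Sum.inl (j, a))) s = v then (0:ℝ) else 1)) * ∏ i, sw P π t (ν i))
      = (mct' P π m t) ^ g := by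
    rw [← Equiv.sum_comp myE]
    have hterm : ∀ p : ((Fin g → Fin m → (Fin (t+1) → V)) × (Fin r → (Fin (t+1) → V))),
        ((∏ j : Fin g, (if ∀ v : V, ∃ (a : Fin m) (s : Fin (t+1)),
            (myE p) (E.symm (Sum.inl (j, a))) s = v then (0:ℝ) else 1)) * ∏ i, sw P π t (myE p i))
        = (∏ j : Fin g, ((if ∀ v : V, ∃ (a : Fin m) (s : Fin (t+1)), p.1 j a s = v then (0:ℝ) else 1)
              * ∏ a : Fin m, sw P π t (p.1 j a)))
          * ∏ x : Fin r, sw P π t (p.2 x) := by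
      intro p
      have hval : ∀ (j : Fin g) (a : Fin m), (myE p) (E.symm (Sum.inl (j, a))) = p.1 j a := by
        intro j a
        show Sum.elim (fun q => p.1 q.1 q.2) p.2 (E (E.symm (Sum.inl (j, a)))) = p.1 j a
        rw [Equiv.apply_symm_apply]
        rfl
      have hprod : (∏ i, sw P π t (myE p i))
          = (∏ j : Fin g, ∏ a : Fin m, sw P π t (p.1 j a)) * ∏ x : Fin r, sw P π t (p.2 x) := by
        rw [← Equiv.prod_comp E.symm (fun i => sw P π t (myE p i))]
        rw [Fintype.prod_sum_type]
        congr 1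
        · rw [Fintype.prod_prod_type]
          apply Finset.prod_congr rfl; intro j _
          apply Finset.prod_congr rfl; intro a _
          rw [hval j a]
        · apply Finset.prod_congr rfl; intro x _
          congr 1
          show Sum.elim (fun q => p.1 q.1 q.2) p.2 (E (E.symm (Sum.inr x))) = p.2 x
          rw [Equiv.apply_symm_apply]
          rfl
      simp only [hval, hprod]
      rw [Finset.prod_mul_distrib]
      ring
    rw [Finset.sum_congr rfl (fun p _ => hterm p)]
    rw [Fintype.sum_prod_type]
    rw [show (∑ η : Fin g → Fin m → (Fin (t+1) → V), ∑ ρ : Fin r → (Fin (t+1) → V),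
        (∏ j : Fin g, ((if ∀ v : V, ∃ (a : Fin m) (s : Fin (t+1)), η j a s = v then (0:ℝ) else 1)
            * ∏ a : Fin m, sw P π t (η j a))) * ∏ x : Fin r, sw P π t (ρ x))
      = (∑ η : Fin g → Fin m → (Fin (t+1) → V),
          ∏ j : Fin g, ((if ∀ v : V, ∃ (a : Fin m) (s : Fin (t+1)), η j a s = v then (0:ℝ) else 1)
            * ∏ a : Fin m, sw P π t (η j a)))
        * (∑ ρ : Fin r → (Fin (t+1) → V), ∏ x : Fin r, sw P π t (ρ x)) from by
      rw [Finset.sum_mul_sum]]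
    have hρ : (∑ ρ : Fin r → (Fin (t+1) → V), ∏ x : Fin r, sw P π t (ρ x)) = 1 := by
      rw [← Fintype.prod_sum (fun (_ : Fin r) (u : Fin (t+1) → V) => sw P π t u)]
      rw [Finset.prod_congr rfl (fun x _ => sw_sum P π hrow hπ1 t), Finset.prod_const_one]
    have hη : (∑ η : Fin g → Fin m → (Fin (t+1) → V),
          ∏ j : Fin g, ((if ∀ v : V, ∃ (a : Fin m) (s : Fin (t+1)), η j a s = v then (0:ℝ) else 1)
            * ∏ a : Fin m, sw P π t (η j a))) = (mct' P π m t) ^ g := by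
      rw [← Fintype.prod_sum (fun (_ : Fin g) (σ : Fin m → (Fin (t+1) → V)) =>
        (if ∀ v : V, ∃ (a : Fin m) (s : Fin (t+1)), σ a s = v then (0:ℝ) else 1)
          * ∏ a : Fin m, sw P π t (σ a))]
      have hσ : (∑ σ : Fin m → (Fin (t+1) → V),
          (if ∀ v : V, ∃ (a : Fin m) (s : Fin (t+1)), σ a s = v then (0:ℝ) else 1)
            * ∏ a : Fin m, sw P π t (σ a)) = mct' P π m t := by
        rw [show mct' P π m t = ∑ σ : Fin m → (Fin (t+1) → V),
          (if ∀ v : V, ∃ (i : Fin m) (s : Fin (t+1)), σ i s = v then 0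
           else ∏ i, sw P π t (σ i)) from rfl]
        apply Finset.sum_congr rfl
        intro σ _
        rw [ite_mul, zero_mul, one_mul]
      rw [Finset.prod_congr rfl (fun j _ => hσ), Finset.prod_const, Finset.card_univ,
        Fintype.card_fin]
    rw [hρ, hη, mul_one]
  exact step1.trans (le_of_eq step2)

end Aux


/-- If for some `C > 0` and `c ∈ (0,1)` one has
`P_{π⊗k}(τ_cov(k) ≤ ⌈C·t_cov/k⌉) ≥ c` for all `k ≤ t_cov`, then for every `1 ≤ ℓ ≤ k`,
`P_{π⊗k}(τ_cov(k) ≥ ℓ·⌈C·t_cov/k⌉) ≤ (1−c)^{⌊ℓ/2⌋}`. -/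
theorem multi_cover_tail_geometric {V : Type*} [Fintype V] [DecidableEq V] [Nonempty V]
    (P : V → V → ℝ) (π : V → ℝ)
    (hnn : ∀ x y, 0 ≤ P x y) (hrow : ∀ x, ∑ y, P x y = 1)
    (hirr : ∀ x y, ∃ n : ℕ, 0 < (Matrix.of P ^ n) x y)
    (hπ0 : ∀ x, 0 < π x) (hπ1 : ∑ x, π x = 1)
    (hrev : ∀ x y, π x * P x y = π y * P y x)
    (C c : ℝ) (hC : 0 < C) (hc0 : 0 < c) (hc1 : c < 1)
    (h : ∀ k : ℕ, 0 < k → (k : ℝ) ≤ tcov P →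
      c ≤ 1 - multiCoverTail P π k ⌈C * tcov P / k⌉₊) :
    ∀ k : ℕ, 0 < k → (k : ℝ) ≤ tcov P →
      ∀ ℓ : ℕ, 1 ≤ ℓ → ℓ ≤ k →
        multiCoverTail P π k (ℓ * ⌈C * tcov P / k⌉₊ - 1) ≤ (1 - c) ^ (ℓ / 2) := by
  intro k hk hkt ℓ hℓ1 hℓk
  have hπnn : ∀ x, 0 ≤ π x := fun x => (hπ0 x).le
  set T := ⌈C * tcov P / k⌉₊ with hT
  have hkR : (0:ℝ) < k := by exact_mod_cast hk
  have htcov : (0:ℝ) < tcov P := lt_of_lt_of_le hkR hkt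
  have hx : 0 < C * tcov P / k := by positivity
  have hT1 : 1 ≤ T := Nat.one_le_ceil_iff.2 hx
  by_cases hℓ2 : ℓ < 2
  · -- ℓ = 1 case
    have hg : ℓ / 2 = 0 := by omega
    rw [hg, pow_zero]
    rw [mctEq]
    have := grouping P π hnn hπnn hrow hπ1 0 k k (ℓ * T - 1) (by omega)
    simpa using this
  · push_neg at hℓ2
    set L : ℝ := (ℓ : ℝ) with hL
    have hL2 : (2:ℝ) ≤ L := by rw [hL]; exact_mod_cast hℓ2
    have hLk : L ≤ (k:ℝ) := by rw [hL]; exact_mod_cast hℓk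
    have hL1 : (0:ℝ) < L - 1 := by linarith
    set m := ⌈(k:ℝ)/(L-1)⌉₊ with hm
    have hmlow : (k:ℝ)/(L-1) ≤ m := Nat.le_ceil _
    have hm1 : 1 ≤ m := Nat.one_le_ceil_iff.2 (by positivity)
    have hmk : m ≤ k := Nat.ceil_le.2 (div_le_self (by positivity) (by linarith))
    set g := ℓ / 2 with hgdef
    have hg1 : 1 ≤ g := by omega
    have hg2 : 2 * (g:ℝ) ≤ L := by
      have h5 : 2 * g ≤ ℓ := by omega
      rw [hL]
      exact_mod_cast h5
    have hgR1 : (1:ℝ) ≤ g := by exact_mod_cast hg1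
    have hmup : (m:ℝ) < (k:ℝ)/(L-1) + 1 := Nat.ceil_lt_add_one (by positivity)
    have hgm : g * m ≤ k := by
      have hA : (m:ℝ)*(L-1) < (k:ℝ) + (L-1) := by
        have h1 := mul_lt_mul_of_pos_right hmup hL1
        rwa [add_mul, div_mul_cancel₀ _ (ne_of_gt hL1), one_mul] at h1
      have hkey : (g:ℝ) * m * (2*(L-1)) < ((k:ℝ)+1) * (2*(L-1)) := by
        nlinarith [mul_nonneg (by linarith : (0:ℝ) ≤ L - 2)
          (by linarith : (0:ℝ) ≤ (k:ℝ) - L + 1),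
          mul_le_mul_of_nonneg_right hg2 (by positivity : (0:ℝ) ≤ (m:ℝ)*(L-1)),
          mul_lt_mul_of_pos_left hA (by linarith : (0:ℝ) < L)]
      have h2 : (g:ℝ) * m < (k:ℝ) + 1 :=
        lt_of_mul_lt_mul_right (by linarith [hkey]) (by linarith : (0:ℝ) ≤ 2*(L-1))
      have h3 : ((g*m : ℕ) : ℝ) < ((k+1 : ℕ) : ℝ) := by push_cast; linarith
      have h4 : g * m < k + 1 := by exact_mod_cast h3
      omega
    have hTle : (C * tcov P / k) ≤ T := Nat.le_ceil _
    have hT1R : (1:ℝ) ≤ (T:ℝ) := by exact_mod_cast hT1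
    have hmtcov : (m:ℝ) ≤ tcov P := le_trans (by exact_mod_cast hmk) hkt
    have hm0 : (0:ℝ) < m := by exact_mod_cast hm1
    have hTm : ⌈C * tcov P / m⌉₊ ≤ ℓ * T - 1 := by
      apply Nat.ceil_le.2
      have h4 : 1 ≤ ℓ * T := Nat.one_le_iff_ne_zero.2 (by positivity)
      have hcast : ((ℓ*T - 1 : ℕ) : ℝ) = L * T - 1 := by
        push_cast [Nat.cast_sub h4]
        ring
      rw [hcast]
      have hstep1 : C * tcov P / m ≤ C * tcov P / ((k:ℝ)/(L-1)) := by
        apply div_le_div_of_nonneg_left (by positivity) (by positivity) hmlow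
      have hstep1' : C * tcov P / ((k:ℝ)/(L-1)) = (L-1) * (C * tcov P / k) := by
        field_simp
      have hstep2 : (L-1) * (C * tcov P / k) ≤ (L-1) * T :=
        mul_le_mul_of_nonneg_left hTle (by linarith)
      have hstep3 : (L-1) * T ≤ L * T - 1 := by nlinarith
      linarith [hstep1.trans_eq hstep1']
    have hhm := h m (by omega) hmtcov
    have hbound : multiCoverTail P π m ⌈C * tcov P / m⌉₊ ≤ 1 - c := by linarith
    have hchain1 : multiCoverTail P π k (ℓ*T - 1) ≤ (multiCoverTail P π m (ℓ*T-1))^g := by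
      rw [mctEq, mctEq]
      exact grouping P π hnn hπnn hrow hπ1 g m k _ hgm
    have hmono : multiCoverTail P π m (ℓ*T-1) ≤ multiCoverTail P π m ⌈C * tcov P / m⌉₊ :=
      mct_mono P π hnn hπnn hrow m hTm
    have hnn1 : 0 ≤ multiCoverTail P π m (ℓ*T-1) := mct_nonneg P π hnn hπnn m _
    calc multiCoverTail P π k (ℓ*T-1) ≤ (multiCoverTail P π m (ℓ*T-1))^g := hchain1
      _ ≤ (1-c)^g := pow_le_pow_left₀ hnn1 (hmono.trans hbound) g
end
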